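/- arXiv:2312.14143 — 8 statements merged into one kernel-verified Lean document; each statement's English description precedes it below -/
import Mathlib

section
/- Fix a real R ≥ 1, an integer j ≥ 1, and a value κ* of the w-mesoscopic coarsening attained on {k ∈ 𝔎_M : τ₁(k) ≤ R·M}. Then the random variable given by the maximum, over k ∈ 𝔎_M with τ₁(k) ≤ R·M whose w-mesoscopic coarsening equals κ*, of Σ_{i=1}^M Z^j_{i,k_{i−1},k_i}, is stochastically dominated by 2^{j+1}·B, where B is a Binomial(M, p) random variable with p = min(1, 8·w³·C₁·exp(−C₂·2^{jβ})); that is, for every real t, ℙ( max_{k : τ₁(k) ≤ RM, coarsening(k) = κ*} Σ_{i=1}^M Z^j_{i,k_{i−1},k_i} ≥ 2^{j+1}·t ) ≤ ℙ(B ≥ t). -/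
set_option maxHeartbeats 1000000

open MeasureTheory ProbabilityTheory Real
open scoped ProbabilityTheory Classical ENNReal

/-- `τ₁(k) = ∑_{i=1}^M |k_i − k_{i−1}|` for `k ∈ ℤ^{M+1}`. -/
def tau1 {M : ℕ} (k : Fin (M + 1) → ℤ) : ℤ :=
  ∑ i : Fin M, |k i.succ - k i.castSucc|

/-- `Z^j` truncation: `Z^j = 2^{j+1}·1{2^j ≤ Z ≤ 2^{j+1}}`. -/
noncomputable def Zdyad (j : ℤ) (x : ℝ) : ℝ :=
  if (2 : ℝ) ^ j ≤ x ∧ x ≤ (2 : ℝ) ^ (j + 1) then (2 : ℝ) ^ (j + 1) else 0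

/-- The `w`-mesoscopic coarsening of `k ∈ ℤ^{M+1}`. -/
noncomputable def mesoCoarsen (M w : ℕ) (k : Fin (M + 1) → ℤ) :
    (Fin (M / w) → ℤ) × Set (Fin M) × (Fin (M + 1) → Option ℤ) :=
  ⟨fun i => Int.fdiv
      (k ⟨(i.1 + 1) * w,
        Nat.lt_succ_of_le ((Nat.mul_le_mul_right w (Nat.succ_le_of_lt i.isLt)).trans
          (Nat.div_mul_le_self M w))⟩) ((w : ℤ) ^ 2),
    {i : Fin M | (w : ℤ) ≤ |k i.succ - k i.castSucc|},
    fun p => if ∃ j : Fin M, (w : ℤ) ≤ |k j.succ - k j.castSucc| ∧ (j.succ = p ∨ j.castSucc = p)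
      then some (k p) else none⟩

/-- The upper tail `ℙ(B ≥ t)` of a `Binomial(M, p)` random variable `B`. -/
noncomputable def binomTail (M : ℕ) (p t : ℝ) : ℝ :=
  ∑ m ∈ Finset.range (M + 1),
    if t ≤ (m : ℝ) then (M.choose m : ℝ) * p ^ m * (1 - p) ^ (M - m) else 0

lemma binomTail_nonneg {p : ℝ} (h0 : 0 ≤ p) (h1 : p ≤ 1) (n : ℕ) (t : ℝ) :
    0 ≤ binomTail n p t := by
  apply Finset.sum_nonneg
  intro m _
  split
  · exact mul_nonneg (mul_nonneg (Nat.cast_nonneg _) (pow_nonneg h0 m)) (pow_nonneg (by linarith) _)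
  · exact le_rfl

lemma binomTail_succ (n : ℕ) (p t : ℝ) :
    binomTail (n + 1) p t = p * binomTail n p (t - 1) + (1 - p) * binomTail n p t := by
  unfold binomTail
  rw [Finset.sum_range_succ' (fun m => if t ≤ (m : ℝ) then ((n+1).choose m : ℝ) * p ^ m * (1 - p) ^ (n + 1 - m) else 0) (n+1)]
  rw [Finset.mul_sum, Finset.mul_sum]
  have h2 : ∑ m ∈ Finset.range (n + 1), (1 - p) * (if t ≤ (m : ℝ) then (n.choose m : ℝ) * p ^ m * (1 - p) ^ (n - m) else 0)
      = (∑ m ∈ Finset.range (n + 1), if t ≤ ((m : ℝ) + 1) then (n.choose (m+1) : ℝ) * p ^ (m+1) * (1 - p) ^ (n - m) else 0)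
        + (if t ≤ 0 then (1 - p) ^ (n + 1) else 0) := by
    rw [Finset.sum_range_succ' (fun m => (1 - p) * (if t ≤ (m : ℝ) then (n.choose m : ℝ) * p ^ m * (1 - p) ^ (n - m) else 0)) n]
    rw [Finset.sum_range_succ (fun m => if t ≤ ((m : ℝ) + 1) then (n.choose (m+1) : ℝ) * p ^ (m+1) * (1 - p) ^ (n - m) else 0) n]
    have hz : (if t ≤ ((n : ℝ) + 1) then (n.choose (n+1) : ℝ) * p ^ (n+1) * (1 - p) ^ (n - n) else 0) = 0 := by
      simp [Nat.choose_succ_self]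
    rw [hz, add_zero]
    congr 1
    · apply Finset.sum_congr rfl
      intro m hm
      rw [Finset.mem_range] at hm
      rw [mul_ite, mul_zero]
      congr 1
      · push_cast; ring_nf
      · have : n - m = (n - (m+1)) + 1 := by omega
        rw [this, pow_succ]
        push_cast
        ring
    · simp only [Nat.cast_zero, mul_ite, mul_zero]
      split
      · simp [pow_succ]; ring
      · rfl
  rw [h2]
  rw [← add_assoc, ← Finset.sum_add_distrib]
  congr 1
  · apply Finset.sum_congr rfl
    intro m hm
    have hsub : n + 1 - (m + 1) = n - m := by omega
    simp only [Nat.cast_add, Nat.cast_one, hsub]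
    by_cases ht : t ≤ (m:ℝ) + 1
    · rw [if_pos ht, if_pos (by linarith : t - 1 ≤ (m:ℝ)), if_pos ht, Nat.choose_succ_succ]
      push_cast; ring
    · rw [if_neg ht, if_neg (fun h => ht (by linarith)), if_neg ht, mul_zero, add_zero]
  · simp only [Nat.cast_zero, Nat.choose_zero_right, Nat.cast_one, pow_zero, Nat.sub_zero]
    split <;> ring

lemma count_tail_le
    {Ω : Type} [MeasureSpace Ω] (hprob : IsProbabilityMeasure (ℙ : Measure Ω))
    {ι : Type*} (m : ι → MeasurableSpace Ω)
    (hle : ∀ i, m i ≤ (inferInstance : MeasurableSpace Ω))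
    (hindep : iIndep m ℙ)
    (B : ι → Set Ω) (hB : ∀ i, MeasurableSet[m i] (B i))
    (p : ℝ) (hp0 : 0 ≤ p) (hp1 : p ≤ 1)
    (hpB : ∀ i, ℙ (B i) ≤ ENNReal.ofReal p)
    (s : Finset ι) (t : ℝ) :
    ℙ {ω | t ≤ ((s.filter (fun i => ω ∈ B i)).card : ℝ)}
      ≤ ENNReal.ofReal (binomTail s.card p t) := by
  suffices h : ∀ (s : Finset ι), ∀ t : ℝ,
      MeasurableSet[⨆ i ∈ s, m i] {ω | t ≤ ((s.filter (fun i => ω ∈ B i)).card : ℝ)} ∧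
      ℙ {ω | t ≤ ((s.filter (fun i => ω ∈ B i)).card : ℝ)}
        ≤ ENNReal.ofReal (binomTail s.card p t) from (h s t).2
  intro s
  induction s using Finset.induction_on with
  | empty =>
    intro t
    refine ⟨?_, ?_⟩
    · simp only [Finset.filter_empty, Finset.card_empty, Nat.cast_zero]
      exact MeasurableSet.const _
    · simp only [Finset.filter_empty, Finset.card_empty, Nat.cast_zero]
      by_cases ht : t ≤ 0
      · have hset : {ω : Ω | t ≤ (0:ℝ)} = Set.univ := by ext ω; simp [ht]
        rw [hset, measure_univ, binomTail]
        simp [ht]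
      · have : {ω : Ω | t ≤ (0:ℝ)} = ∅ := by
          ext ω; simp [ht]
        rw [this]
        simp
  | @insert a s ha IH =>
    intro t
    set E1 := {ω : Ω | t - 1 ≤ ((s.filter (fun i => ω ∈ B i)).card : ℝ)} with hE1
    set E2 := {ω : Ω | t ≤ ((s.filter (fun i => ω ∈ B i)).card : ℝ)} with hE2
    have hdecomp : {ω : Ω | t ≤ (((insert a s).filter (fun i => ω ∈ B i)).card : ℝ)}
        = (B a ∩ E1) ∪ ((B a)ᶜ ∩ E2) := by
      ext ω
      by_cases hω : ω ∈ B a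
      · have : (insert a s).filter (fun i => ω ∈ B i) = insert a (s.filter (fun i => ω ∈ B i)) := by
          rw [Finset.filter_insert, if_pos hω]
        simp only [Set.mem_setOf_eq, this, Set.mem_union, Set.mem_inter_iff, Set.mem_compl_iff,
          hω, true_and, not_true, false_and, or_false]
        rw [Finset.card_insert_of_notMem (fun hc => ha (Finset.mem_of_mem_filter a hc))]
        push_cast
        constructor <;> (intro h; simp only [hE1, Set.mem_setOf_eq] at *; linarith)
      · have : (insert a s).filter (fun i => ω ∈ B i) = s.filter (fun i => ω ∈ B i) := by
          rw [Finset.filter_insert, if_neg hω]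
        simp only [Set.mem_setOf_eq, this, Set.mem_union, Set.mem_inter_iff, Set.mem_compl_iff,
          hω, false_and, false_or, not_false_iff, true_and]
        exact Iff.rfl
    have hmle : (⨆ i ∈ s, m i) ≤ ⨆ i ∈ insert a s, m i := by
      exact iSup₂_le fun i hi => le_iSup₂ (f := fun i _ => m i) i (Finset.mem_insert_of_mem hi)
    have hmale : m a ≤ ⨆ i ∈ insert a s, m i :=
      le_iSup₂ (f := fun i _ => m i) a (Finset.mem_insert_self a s)
    have hsle : (⨆ i ∈ s, m i) ≤ (inferInstance : MeasurableSpace Ω) :=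
      iSup₂_le fun i _ => hle i
    have hE1m := (IH (t-1)).1
    have hE2m := (IH t).1
    have hmeas1 : MeasurableSet[⨆ i ∈ insert a s, m i]
        {ω : Ω | t ≤ (((insert a s).filter (fun i => ω ∈ B i)).card : ℝ)} := by
      rw [hdecomp]
      exact ((hmale _ (hB a)).inter (hmle _ hE1m)).union
        (((hmale _ (hB a)).compl).inter (hmle _ hE2m))
    refine ⟨hmeas1, ?_⟩
    have hI : Indep (m a) (⨆ i ∈ s, m i) ℙ := by
      have h0 := indep_biSup_compl hle hindep {a}
      refine indep_of_indep_of_le_right (indep_of_indep_of_le_left h0 ?_) ?_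
      · exact le_iSup₂ (f := fun (i : ι) (_ : i ∈ ({a} : Set ι)) => m i) a (Set.mem_singleton a)
      · exact iSup₂_le fun i hi => le_iSup₂ (f := fun (i : ι) (_ : i ∈ ({a} : Set ι)ᶜ) => m i) i
          (fun hc => ha ((Set.mem_singleton_iff.mp hc) ▸ hi))
    have hmul1 : ℙ (B a ∩ E1) = ℙ (B a) * ℙ E1 :=
      (Indep_iff _ _ _ |>.mp hI) _ _ (hB a) hE1m
    have hmul2 : ℙ ((B a)ᶜ ∩ E2) = ℙ ((B a)ᶜ) * ℙ E2 :=
      (Indep_iff _ _ _ |>.mp hI) _ _ (MeasurableSet.compl (hB a)) hE2m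
    rw [hdecomp]
    refine le_trans (measure_union_le _ _) ?_
    rw [hmul1, hmul2]
    have hBam : MeasurableSet (B a) := hle a _ (hB a)
    set q := (ℙ (B a)).toReal with hq
    have hq0 : 0 ≤ q := ENNReal.toReal_nonneg
    have hq1 : q ≤ 1 := by
      have h := prob_le_one (μ := (ℙ : Measure Ω)) (s := B a)
      have h2 := (ENNReal.toReal_le_toReal (measure_ne_top _ _) ENNReal.one_ne_top).mpr h
      simpa using h2
    have hqp : q ≤ p := ENNReal.toReal_le_of_le_ofReal hp0 (hpB a)
    have hBaeq : ℙ (B a) = ENNReal.ofReal q := (ENNReal.ofReal_toReal (measure_ne_top _ _)).symm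
    have hBca : ℙ ((B a)ᶜ) = ENNReal.ofReal (1 - q) := by
      rw [prob_compl_eq_one_sub hBam, hBaeq, ← ENNReal.ofReal_one, ← ENNReal.ofReal_sub _ hq0]
    set e1 := (ℙ E1).toReal with he1
    set e2 := (ℙ E2).toReal with he2
    have hE1eq : ℙ E1 = ENNReal.ofReal e1 := (ENNReal.ofReal_toReal (measure_ne_top _ _)).symm
    have hE2eq : ℙ E2 = ENNReal.ofReal e2 := (ENNReal.ofReal_toReal (measure_ne_top _ _)).symm
    have he10 : 0 ≤ e1 := ENNReal.toReal_nonneg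
    have he20 : 0 ≤ e2 := ENNReal.toReal_nonneg
    have he21 : e2 ≤ e1 := by
      apply ENNReal.toReal_le_toReal (measure_ne_top _ _) (measure_ne_top _ _) |>.mpr
      apply measure_mono
      intro ω hω
      simp only [hE1, hE2, Set.mem_setOf_eq] at *
      linarith
    have hb1 : e1 ≤ binomTail s.card p (t - 1) :=
      ENNReal.toReal_le_of_le_ofReal (binomTail_nonneg hp0 hp1 _ _) (IH (t-1)).2
    have hb2 : e2 ≤ binomTail s.card p t :=
      ENNReal.toReal_le_of_le_ofReal (binomTail_nonneg hp0 hp1 _ _) (IH t).2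
    rw [hBaeq, hBca, hE1eq, hE2eq, ← ENNReal.ofReal_mul hq0, ← ENNReal.ofReal_mul (by linarith),
      ← ENNReal.ofReal_add (by positivity) (by nlinarith)]
    apply ENNReal.ofReal_le_ofReal
    rw [Finset.card_insert_of_notMem ha, binomTail_succ]
    nlinarith [mul_nonneg (sub_nonneg.mpr hqp) (sub_nonneg.mpr he21),
      mul_nonneg hp0 (sub_nonneg.mpr hb1), mul_nonneg (sub_nonneg.mpr hp1) (sub_nonneg.mpr hb2)]

lemma small_walk {M : ℕ} (k : Fin (M+1) → ℤ) (w : ℤ) :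
    ∀ (d b : ℕ) (h : b + d ≤ M),
      (∀ jj : Fin M, b ≤ jj.1 → jj.1 < b + d → |k jj.succ - k jj.castSucc| ≤ w - 1) →
      |k ⟨b + d, by omega⟩ - k ⟨b, by omega⟩| ≤ d * (w - 1) := by
  intro d
  induction d with
  | zero => intro b h _; simp
  | succ d IH =>
    intro b h hsmall
    have hM : b + d < M := by omega
    set jj : Fin M := ⟨b + d, hM⟩ with hjj
    have h1 : |k jj.succ - k jj.castSucc| ≤ w - 1 :=
      hsmall jj (by simp [hjj]) (by simp [hjj])
    have h2 : |k ⟨b + d, by omega⟩ - k ⟨b, by omega⟩| ≤ d * (w - 1) :=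
      IH b (by omega) (fun j hb hlt => hsmall j hb (by omega))
    have hsucc : (jj.succ : Fin (M+1)) = ⟨b + (d+1), by omega⟩ := by
      apply Fin.ext; simp [hjj]; omega
    have hcast : (jj.castSucc : Fin (M+1)) = ⟨b + d, by omega⟩ := by
      apply Fin.ext; simp [hjj]
    rw [hsucc, hcast] at h1
    calc |k ⟨b + (d+1), by omega⟩ - k ⟨b, by omega⟩|
        ≤ |k ⟨b + (d+1), by omega⟩ - k ⟨b + d, by omega⟩| + |k ⟨b + d, by omega⟩ - k ⟨b, by omega⟩| := by
          apply abs_sub_le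
      _ ≤ (w - 1) + d * (w - 1) := add_le_add h1 h2
      _ = (d + 1 : ℕ) * (w - 1) := by push_cast; ring

lemma meso_pairs {M w : ℕ} (hw : 2 ≤ w) (kstar : Fin (M+1) → ℤ)
    (K : Set (Fin (M+1) → ℤ))
    (hK : ∀ k ∈ K, k 0 = 0 ∧ mesoCoarsen M w k = mesoCoarsen M w kstar)
    (i : Fin M) :
    ∃ P : Finset (ℤ × ℤ), P.card ≤ 8 * w^3 ∧
      ∀ k ∈ K, (k i.castSucc, k i.succ) ∈ P := by
  have hw0 : 0 < w := by omega
  have hfst : ∀ k ∈ K, ∀ i0 : Fin (M / w),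
      Int.fdiv (k ⟨(i0.1 + 1) * w, Nat.lt_succ_of_le ((Nat.mul_le_mul_right
          w (Nat.succ_le_of_lt i0.isLt)).trans (Nat.div_mul_le_self M w))⟩) ((w : ℤ) ^ 2)
      = Int.fdiv (kstar ⟨(i0.1 + 1) * w, Nat.lt_succ_of_le ((Nat.mul_le_mul_right
          w (Nat.succ_le_of_lt i0.isLt)).trans (Nat.div_mul_le_self M w))⟩) ((w : ℤ) ^ 2) := by
    intro k hk i0
    exact congrFun (congrArg Prod.fst (hK k hk).2) i0
  have hlargeiff : ∀ k ∈ K, ∀ i0 : Fin M,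
      ((w:ℤ) ≤ |k i0.succ - k i0.castSucc| ↔ (w:ℤ) ≤ |kstar i0.succ - kstar i0.castSucc|) := by
    intro k hk i0
    have h2 : ({i : Fin M | (w : ℤ) ≤ |k i.succ - k i.castSucc|} : Set (Fin M))
        = {i : Fin M | (w : ℤ) ≤ |kstar i.succ - kstar i.castSucc|} :=
      congrArg (fun x => x.2.1) (hK k hk).2
    exact Set.ext_iff.mp h2 i0
  have hval : ∀ k ∈ K, ∀ p : Fin (M+1),
      (∃ jj : Fin M, (w:ℤ) ≤ |kstar jj.succ - kstar jj.castSucc| ∧ (jj.succ = p ∨ jj.castSucc = p)) →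
      k p = kstar p := by
    intro k hk p hadj
    have h3 : (fun p => if ∃ jj : Fin M, (w : ℤ) ≤ |k jj.succ - k jj.castSucc| ∧ (jj.succ = p ∨ jj.castSucc = p)
        then some (k p) else none)
        = (fun p => if ∃ jj : Fin M, (w : ℤ) ≤ |kstar jj.succ - kstar jj.castSucc| ∧ (jj.succ = p ∨ jj.castSucc = p)
        then some (kstar p) else none) :=
      congrArg (fun x => x.2.2) (hK k hk).2
    have h4 := congrFun h3 p
    have hadj' : ∃ jj : Fin M, (w:ℤ) ≤ |k jj.succ - k jj.castSucc| ∧ (jj.succ = p ∨ jj.castSucc = p) := by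
      obtain ⟨jj, h5, h6⟩ := hadj
      exact ⟨jj, (hlargeiff k hk jj).mpr h5, h6⟩
    rw [if_pos hadj', if_pos hadj] at h4
    exact Option.some.inj h4
  have anchor : ∀ (a : ℕ) (ha : a ≤ M), ∃ lo : ℤ,
      ∀ k ∈ K, lo ≤ k ⟨a, by omega⟩ ∧ k ⟨a, by omega⟩ < lo + 3 * (w:ℤ)^2 := by
    intro a ha
    set c := w * (a / w) with hc
    have hca : c ≤ a := Nat.mul_div_le a w
    have hacw : a - c < w := by
      have h1 := Nat.mod_lt a hw0
      have h2 := Nat.div_add_mod a w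
      omega
    set S := (Finset.Icc c a).filter
      (fun b => ∃ jj : Fin M, (w:ℤ) ≤ |kstar jj.succ - kstar jj.castSucc|
        ∧ (jj.1 + 1 = b ∨ jj.1 = b)) with hS
    by_cases hSne : S.Nonempty
    · set b := S.max' hSne with hb
      have hbS : b ∈ S := S.max'_mem hSne
      rw [hS, Finset.mem_filter, Finset.mem_Icc] at hbS
      obtain ⟨⟨hcb, hba⟩, jj0, hjl, hjadj⟩ := hbS
      have hbM : b ≤ M := by omega
      have hagree : ∀ k ∈ K, k ⟨b, by omega⟩ = kstar ⟨b, by omega⟩ := by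
        intro k hk
        apply hval k hk
        refine ⟨jj0, hjl, ?_⟩
        rcases hjadj with h | h
        · left; apply Fin.ext; simpa using h
        · right; apply Fin.ext; simpa using h
      have hsmall : ∀ k ∈ K, ∀ jj : Fin M, b ≤ jj.1 → jj.1 < a →
          |k jj.succ - k jj.castSucc| ≤ (w:ℤ) - 1 := by
        intro k hk jj hbj hja
        by_contra hcon
        have hlg : (w:ℤ) ≤ |k jj.succ - k jj.castSucc| := by omega
        have hlg' := (hlargeiff k hk jj).mp hlg
        have hmem : (jj.1 + 1) ∈ S := by
          rw [hS, Finset.mem_filter, Finset.mem_Icc]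
          exact ⟨⟨by omega, by omega⟩, jj, hlg', Or.inl rfl⟩
        have := S.le_max' _ hmem
        omega
      refine ⟨kstar ⟨b, by omega⟩ - ((w:ℤ)-1)^2, ?_⟩
      intro k hk
      have hwalk := small_walk k (w:ℤ) (a - b) b (by omega)
        (fun jj h1 h2 => hsmall k hk jj h1 (by omega))
      have hfix : (⟨b + (a - b), by omega⟩ : Fin (M+1)) = ⟨a, by omega⟩ := by
        apply Fin.ext; simp; omega
      rw [hfix, hagree k hk] at hwalk
      have habs : |k ⟨a, by omega⟩ - kstar ⟨b, by omega⟩| ≤ ((w:ℤ)-1) * ((w:ℤ)-1) := by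
        refine le_trans hwalk ?_
        have h1 : ((a - b : ℕ) : ℤ) ≤ (w:ℤ) - 1 := by
          have : a - b < w := by omega
          omega
        have h2 : (0:ℤ) ≤ (w:ℤ) - 1 := by
          have : (2:ℤ) ≤ (w:ℤ) := by exact_mod_cast hw
          omega
        exact mul_le_mul_of_nonneg_right h1 h2
      rw [abs_le] at habs
      constructor <;> nlinarith [habs.1, habs.2, (show (2:ℤ) ≤ (w:ℤ) by exact_mod_cast hw)]
    · have hsmall : ∀ k ∈ K, ∀ jj : Fin M, c ≤ jj.1 → jj.1 < a →
          |k jj.succ - k jj.castSucc| ≤ (w:ℤ) - 1 := by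
        intro k hk jj hcj hja
        by_contra hcon
        have hlg : (w:ℤ) ≤ |k jj.succ - k jj.castSucc| := by omega
        have hlg' := (hlargeiff k hk jj).mp hlg
        apply hSne
        refine ⟨jj.1 + 1, ?_⟩
        rw [hS, Finset.mem_filter, Finset.mem_Icc]
        exact ⟨⟨by omega, by omega⟩, jj, hlg', Or.inl rfl⟩
      have hpin : ∃ v : ℤ, ∀ k ∈ K, v ≤ k ⟨c, by omega⟩ ∧ k ⟨c, by omega⟩ < v + (w:ℤ)^2 := by
        by_cases hq : a / w = 0
        · refine ⟨0, ?_⟩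
          intro k hk
          have h0 : k ⟨c, by omega⟩ = 0 := by
            have : (⟨c, by omega⟩ : Fin (M+1)) = 0 := by
              apply Fin.ext; simp [hc, hq]
            rw [this]; exact (hK k hk).1
          rw [h0]
          constructor
          · exact le_rfl
          · positivity
        · set q := a / w with hqdef
          have hq1 : 1 ≤ q := Nat.pos_of_ne_zero hq
          have hqMw : q ≤ M / w := Nat.div_le_div_right ha
          set i0 : Fin (M / w) := ⟨q - 1, by omega⟩ with hi0
          have hidx : (⟨(i0.1 + 1) * w, Nat.lt_succ_of_le ((Nat.mul_le_mul_right
              w (Nat.succ_le_of_lt i0.isLt)).trans (Nat.div_mul_le_self M w))⟩ : Fin (M+1))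
              = ⟨c, by omega⟩ := by
            apply Fin.ext
            show (i0.1 + 1) * w = c
            have he : (i0.1 + 1) * w = q * w := by
              simp only [hi0]
              rw [Nat.sub_add_cancel hq1]
            rw [he, hc, hqdef]
            exact Nat.mul_comm q w
          set v := Int.fdiv (kstar ⟨c, by omega⟩) ((w:ℤ)^2) with hv
          refine ⟨(w:ℤ)^2 * v, ?_⟩
          intro k hk
          have hfd : Int.fdiv (k ⟨c, by omega⟩) ((w:ℤ)^2) = v := by
            have := hfst k hk i0
            rw [hidx] at this
            exact this
          have hw2 : (0:ℤ) < (w:ℤ)^2 := by positivity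
          rw [Int.fdiv_eq_ediv_of_nonneg _ (le_of_lt hw2)] at hfd
          have hdm := Int.mul_ediv_add_emod (k ⟨c, by omega⟩) ((w:ℤ)^2)
          have hm1 : 0 ≤ (k ⟨c, by omega⟩) % ((w:ℤ)^2) := Int.emod_nonneg _ (by positivity)
          have hm2 : (k ⟨c, by omega⟩) % ((w:ℤ)^2) < (w:ℤ)^2 := Int.emod_lt_of_pos _ hw2
          constructor <;> nlinarith [hfd, hdm, hm1, hm2]
      obtain ⟨v, hpinv⟩ := hpin
      refine ⟨v - ((w:ℤ)-1)^2, ?_⟩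
      intro k hk
      have hwalk := small_walk k (w:ℤ) (a - c) c (by omega)
        (fun jj h1 h2 => hsmall k hk jj h1 (by omega))
      have hfix : (⟨c + (a - c), by omega⟩ : Fin (M+1)) = ⟨a, by omega⟩ := by
        apply Fin.ext; simp; omega
      rw [hfix] at hwalk
      have h1 : ((a - c : ℕ) : ℤ) ≤ (w:ℤ) - 1 := by omega
      have hwZ : (2:ℤ) ≤ (w:ℤ) := by exact_mod_cast hw
      have habs : |k ⟨a, by omega⟩ - k ⟨c, by omega⟩| ≤ ((w:ℤ)-1) * ((w:ℤ)-1) :=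
        le_trans hwalk (mul_le_mul_of_nonneg_right h1 (by omega))
      rw [abs_le] at habs
      obtain ⟨hp1, hp2⟩ := hpinv k hk
      constructor <;> nlinarith [habs.1, habs.2]
  by_cases hbig : (w:ℤ) ≤ |kstar i.succ - kstar i.castSucc|
  · refine ⟨{(kstar i.castSucc, kstar i.succ)}, ?_, ?_⟩
    · rw [Finset.card_singleton]
      have h3 : 0 < w^3 := by positivity
      omega
    · intro k hk
      have h1 : k i.castSucc = kstar i.castSucc := hval k hk _ ⟨i, hbig, Or.inr rfl⟩
      have h2 : k i.succ = kstar i.succ := hval k hk _ ⟨i, hbig, Or.inl rfl⟩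
      simp [h1, h2]
  · obtain ⟨lo, hlo⟩ := anchor i.1 (le_of_lt i.isLt)
    refine ⟨((Finset.Ico lo (lo + 3*(w:ℤ)^2)) ×ˢ (Finset.Ico (1 - (w:ℤ)) (w:ℤ))).image
      (fun q => (q.1, q.1 + q.2)), ?_, ?_⟩
    · refine le_trans (Finset.card_image_le) ?_
      rw [Finset.card_product, Int.card_Ico, Int.card_Ico]
      have e1 : (lo + 3*(w:ℤ)^2 - lo).toNat = 3 * w^2 := by
        rw [show lo + 3*(w:ℤ)^2 - lo = 3*(w:ℤ)^2 by ring]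
        rw [show (3*(w:ℤ)^2) = ((3 * w^2 : ℕ) : ℤ) by push_cast; ring]
        exact Int.toNat_natCast _
      have e2 : ((w:ℤ) - (1 - (w:ℤ))).toNat = 2 * w - 1 := by
        rw [show (w:ℤ) - (1 - (w:ℤ)) = 2*(w:ℤ) - 1 by ring]
        omega
      rw [e1, e2]
      calc 3 * w^2 * (2*w - 1) ≤ 3 * w^2 * (2*w) := by
            exact Nat.mul_le_mul_left _ (Nat.sub_le _ _)
        _ ≤ 8 * w^3 := by nlinarith
    · intro k hk
      have hcs : i.castSucc = (⟨i.1, by omega⟩ : Fin (M+1)) := by apply Fin.ext; simp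
      have hbnd := hlo k hk
      rw [← hcs] at hbnd
      have hsm : |k i.succ - k i.castSucc| ≤ (w:ℤ) - 1 := by
        have := (hlargeiff k hk i)
        omega
      rw [abs_le] at hsm
      apply Finset.mem_image.mpr
      refine ⟨(k i.castSucc, k i.succ - k i.castSucc), ?_, by simp⟩
      rw [Finset.mem_product, Finset.mem_Ico, Finset.mem_Ico]
      exact ⟨⟨hbnd.1, hbnd.2⟩, by omega, by omega⟩

theorem statement3 (C₁ C₂ β : ℝ) (hC₁ : 0 < C₁) (hC₂ : 0 < C₂) (hβ0 : 0 < β) (hβ1 : β < 1)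
    (Ω : Type) [MeasureSpace Ω] (hprob : IsProbabilityMeasure (ℙ : Measure Ω))
    (M : ℕ) (hM : 1 ≤ M)
    (Z : Fin M → ℤ → ℤ → Ω → ℝ) (zmax : ℝ) (hzmax : 0 < zmax)
    (hmeas : ∀ i k k', Measurable (Z i k k'))
    (htail : ∀ (i : Fin M) (k k' : ℤ) (z : ℝ), 0 < z →
      ℙ {ω | z ≤ Z i k k' ω} ≤ ENNReal.ofReal (C₁ * Real.exp (-C₂ * z ^ β)))
    (hbdd : ∀ (i : Fin M) (k k' : ℤ), ℙ {ω | Z i k k' ω ≤ zmax} = 1)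
    (hindep : iIndep (fun i : Fin M =>
      ⨆ p : ℤ × ℤ, MeasurableSpace.comap (Z i p.1 p.2) inferInstance) ℙ)
    (w : ℕ) (hw : 2 ≤ w) (R : ℝ) (hR : 1 ≤ R) (j : ℤ) (hj : 1 ≤ j)
    (κStar : (Fin (M / w) → ℤ) × Set (Fin M) × (Fin (M + 1) → Option ℤ))
    (hκ : κStar ∈ mesoCoarsen M w '' {k : Fin (M + 1) → ℤ | k 0 = 0 ∧ (tau1 k : ℝ) ≤ R * M}) :
    ∀ t : ℝ,
      ℙ {ω | (2 : ℝ) ^ (j + 1) * t ≤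
            ⨆ (k : Fin (M + 1) → ℤ)
              (_ : k 0 = 0 ∧ (tau1 k : ℝ) ≤ R * M ∧ mesoCoarsen M w k = κStar),
              ∑ i : Fin M, Zdyad j (Z i (k i.castSucc) (k i.succ) ω)} ≤
        ENNReal.ofReal (binomTail M
          (min 1 (8 * (w : ℝ) ^ 3 * C₁ * Real.exp (-C₂ * (2 : ℝ) ^ ((j : ℝ) * β)))) t) := by
  intro t
  obtain ⟨kstar, hkstarmem, hkstarcoar⟩ := hκ
  set pmin := min 1 (8 * (w : ℝ) ^ 3 * C₁ * Real.exp (-C₂ * (2 : ℝ) ^ ((j : ℝ) * β))) with hpmin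
  have hexp_pos : 0 < 8 * (w : ℝ) ^ 3 * C₁ * Real.exp (-C₂ * (2 : ℝ) ^ ((j : ℝ) * β)) := by
    have hw0 : (0:ℝ) < (w:ℝ) := by exact_mod_cast (by omega : 0 < w)
    positivity
  have hp0 : 0 ≤ pmin := le_min zero_le_one hexp_pos.le
  have hp1 : pmin ≤ 1 := min_le_left _ _
  set K : Set (Fin (M+1) → ℤ) :=
    {k | k 0 = 0 ∧ (tau1 k : ℝ) ≤ R * M ∧ mesoCoarsen M w k = κStar} with hKdef
  have hKprop : ∀ k ∈ K, k 0 = 0 ∧ mesoCoarsen M w k = mesoCoarsen M w kstar := by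
    intro k hk
    exact ⟨hk.1, hk.2.2.trans hkstarcoar.symm⟩
  choose P hPcard hPmem using fun i => meso_pairs hw kstar K hKprop i
  set msp := fun i : Fin M =>
    ⨆ q : ℤ × ℤ, MeasurableSpace.comap (Z i q.1 q.2) inferInstance with hmsp
  have hle : ∀ i, msp i ≤ (inferInstance : MeasurableSpace Ω) := fun i =>
    iSup_le fun q => (hmeas i q.1 q.2).comap_le
  set B := fun i : Fin M => ⋃ q ∈ P i, {ω : Ω | (2:ℝ)^(j:ℤ) ≤ Z i q.1 q.2 ω} with hBdef
  have hBm : ∀ i, MeasurableSet[msp i] (B i) := by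
    intro i
    apply Finset.measurableSet_biUnion
    intro q hq
    have hcle : MeasurableSpace.comap (Z i q.1 q.2) inferInstance ≤ msp i :=
      le_iSup (fun q : ℤ×ℤ => MeasurableSpace.comap (Z i q.1 q.2) inferInstance) q
    exact hcle _ ⟨Set.Ici ((2:ℝ)^(j:ℤ)), measurableSet_Ici, rfl⟩
  have h2j : (0:ℝ) < (2:ℝ)^(j:ℤ) := zpow_pos (by norm_num) _
  have hexp_eq : ((2:ℝ)^(j:ℤ)) ^ β = (2:ℝ) ^ ((j:ℝ) * β) := by
    rw [← Real.rpow_intCast 2 j, ← Real.rpow_mul (by norm_num)]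
  have hpB : ∀ i, ℙ (B i) ≤ ENNReal.ofReal pmin := by
    intro i
    rcases le_total (1:ℝ) (8 * (w : ℝ) ^ 3 * C₁ * Real.exp (-C₂ * (2 : ℝ) ^ ((j : ℝ) * β)))
      with hc | hc
    · rw [hpmin, min_eq_left hc, ENNReal.ofReal_one]
      exact prob_le_one
    · rw [hpmin, min_eq_right hc]
      refine le_trans (measure_biUnion_finset_le _ _) ?_
      have hterm : ∀ q ∈ P i, ℙ {ω : Ω | (2:ℝ)^(j:ℤ) ≤ Z i q.1 q.2 ω}
          ≤ ENNReal.ofReal (C₁ * Real.exp (-C₂ * (2:ℝ) ^ ((j:ℝ)*β))) := by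
        intro q hq
        have h := htail i q.1 q.2 ((2:ℝ)^(j:ℤ)) h2j
        rwa [hexp_eq] at h
      refine le_trans (Finset.sum_le_sum hterm) ?_
      rw [Finset.sum_const, nsmul_eq_mul]
      have h8 : (((P i).card : ℕ) : ℝ≥0∞) ≤ ((8 * w^3 : ℕ) : ℝ≥0∞) := by
        exact_mod_cast hPcard i
      refine le_trans (mul_le_mul_left h8 _) ?_
      rw [← ENNReal.ofReal_natCast (8 * w^3),
        ← ENNReal.ofReal_mul (by positivity)]
      apply ENNReal.ofReal_le_ofReal
      exact le_of_eq (by push_cast; ring)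
  have hcount := count_tail_le hprob msp hle hindep B hBm pmin hp0 hp1 hpB Finset.univ t
  rw [Finset.card_univ, Fintype.card_fin] at hcount
  refine le_trans (measure_mono ?_) hcount
  intro ω hω
  simp only [Set.mem_setOf_eq] at hω ⊢
  have h2pos : (0:ℝ) < (2:ℝ)^(j+1) := zpow_pos (by norm_num) _
  set N := ((Finset.univ.filter (fun i : Fin M => ω ∈ B i)).card : ℝ) with hN
  have hN0 : 0 ≤ N := by positivity
  have hsup : (⨆ (k : Fin (M + 1) → ℤ)
      (_ : k 0 = 0 ∧ (tau1 k : ℝ) ≤ R * M ∧ mesoCoarsen M w k = κStar),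
      ∑ i : Fin M, Zdyad j (Z i (k i.castSucc) (k i.succ) ω)) ≤ (2:ℝ)^(j+1) * N := by
    apply Real.iSup_le _ (by positivity)
    intro k
    apply Real.iSup_le _ (by positivity)
    intro hkcond
    have hkK : k ∈ K := hkcond
    have hterm : ∀ i : Fin M, Zdyad j (Z i (k i.castSucc) (k i.succ) ω)
        ≤ if ω ∈ B i then (2:ℝ)^(j+1) else 0 := by
      intro i
      unfold Zdyad
      by_cases hcond : (2:ℝ)^(j:ℤ) ≤ Z i (k i.castSucc) (k i.succ) ω
          ∧ Z i (k i.castSucc) (k i.succ) ω ≤ (2:ℝ)^(j+1)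
      · have hmemB : ω ∈ B i :=
          Set.mem_iUnion₂.mpr ⟨(k i.castSucc, k i.succ), hPmem i k hkK, hcond.1⟩
        rw [if_pos hcond, if_pos hmemB]
      · rw [if_neg hcond]
        split
        · positivity
        · exact le_rfl
    calc ∑ i : Fin M, Zdyad j (Z i (k i.castSucc) (k i.succ) ω)
        ≤ ∑ i : Fin M, (if ω ∈ B i then (2:ℝ)^(j+1) else 0) :=
          Finset.sum_le_sum (fun i _ => hterm i)
      _ = (2:ℝ)^(j+1) * N := by
          rw [← Finset.sum_filter, Finset.sum_const, nsmul_eq_mul, hN, mul_comm]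
  have hfin : (2:ℝ)^(j+1) * t ≤ (2:ℝ)^(j+1) * N := le_trans hω hsup
  exact le_of_mul_le_mul_left hfin h2pos
end

section
/- There exist constants C₅, C₆ > 0 and a threshold C₄' > 0, all depending only on C₁, C₂ and β, such that for every constant C₄ ≥ C₄', every integer M ≥ 1, and all sufficiently large R and z (sufficiently large depending only on C₁, C₂, β and C₄): ℙ( Σ over integers j > j_max of ( max over k ∈ 𝔎_M with τ₁(k) ≤ R·M of Σ_{i=1}^M Z^j_{i,k_{i−1},k_i} ) > 0 ) ≤ C₅·exp(−C₆·z^β − C₆·(z/z_max)·z_max^β). -/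
open MeasureTheory ProbabilityTheory Real
open scoped ProbabilityTheory Classical

/-- `j_max = ⌈log₂(min((log(RM))^{C₄} + z, z_max))⌉`. -/
noncomputable def jmaxDef (C₄ R M z zmax : ℝ) : ℤ :=
  ⌈Real.logb 2 (min (Real.log (R * M) ^ C₄ + z) zmax)⌉

lemma abs_le_tau1 {M : ℕ} (k : Fin (M + 1) → ℤ) (hk : k 0 = 0) (i : Fin (M + 1)) :
    |k i| ≤ tau1 k := by
  set κ : ℕ → ℤ := fun n => k ⟨min n M, Nat.lt_succ_of_le (min_le_right n M)⟩ with hκ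
  have hκ0 : κ 0 = 0 := by
    have h0 : (⟨min 0 M, Nat.lt_succ_of_le (min_le_right 0 M)⟩ : Fin (M + 1)) = 0 := by
      ext; simp
    simp only [hκ, h0, hk]
  have hstep : ∀ n, n ≤ M → |κ n| ≤ ∑ j ∈ Finset.range n, |κ (j + 1) - κ j| := by
    intro n
    induction n with
    | zero => intro _; simp [hκ0]
    | succ n ih =>
      intro hn
      have h1 := ih (Nat.le_of_succ_le hn)
      calc |κ (n + 1)| = |κ n + (κ (n + 1) - κ n)| := by ring_nf
        _ ≤ |κ n| + |κ (n + 1) - κ n| := abs_add_le _ _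
        _ ≤ _ := by
            rw [Finset.sum_range_succ]; exact add_le_add h1 le_rfl
  have htau : tau1 k = ∑ j ∈ Finset.range M, |κ (j + 1) - κ j| := by
    rw [tau1, ← Fin.sum_univ_eq_sum_range (fun j => |κ (j + 1) - κ j|) M]
    refine Finset.sum_congr rfl fun j _ => ?_
    have e1 : κ (j.val + 1) = k j.succ := by
      apply congrArg k; ext; have := j.isLt; simp only [Fin.val_succ, Fin.coe_castSucc]; omega
    have e2 : κ j.val = k j.castSucc := by
      apply congrArg k; ext; have := j.isLt; simp only [Fin.val_succ, Fin.coe_castSucc]; omega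
    rw [e1, e2]
  have hκi : κ i.val = k i := by
    apply congrArg k; ext; have := i.isLt; simp only []; omega
  calc |k i| = |κ i.val| := by rw [hκi]
    _ ≤ ∑ j ∈ Finset.range i.val, |κ (j + 1) - κ j| := hstep i.val (Nat.lt_succ_iff.mp i.isLt)
    _ ≤ ∑ j ∈ Finset.range M, |κ (j + 1) - κ j| := by
        refine Finset.sum_le_sum_of_subset_of_nonneg
          (Finset.range_subset_range.mpr (Nat.lt_succ_iff.mp i.isLt)) fun _ _ _ => abs_nonneg _
    _ = tau1 k := htau.symm

set_option maxHeartbeats 2000000 in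
theorem statement4 (C₁ C₂ β : ℝ) (hC₁ : 0 < C₁) (hC₂ : 0 < C₂) (hβ0 : 0 < β) (hβ1 : β < 1) :
    ∃ C₅ C₆ C₄' : ℝ, 0 < C₅ ∧ 0 < C₆ ∧ 0 < C₄' ∧
      ∀ C₄ : ℝ, C₄' ≤ C₄ →
      ∃ R₀ z₀ : ℝ,
        ∀ (Ω : Type) [MeasureSpace Ω], IsProbabilityMeasure (ℙ : Measure Ω) →
        ∀ (M : ℕ), 1 ≤ M →
        ∀ (Z : Fin M → ℤ → ℤ → Ω → ℝ) (zmax : ℝ), 0 < zmax →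
        (∀ i k k', Measurable (Z i k k')) →
        (∀ (i : Fin M) (k k' : ℤ) (z : ℝ), 0 < z →
          ℙ {ω | z ≤ Z i k k' ω} ≤ ENNReal.ofReal (C₁ * Real.exp (-C₂ * z ^ β))) →
        (∀ (i : Fin M) (k k' : ℤ), ℙ {ω | Z i k k' ω ≤ zmax} = 1) →
        iIndep (fun i : Fin M =>
          ⨆ p : ℤ × ℤ, MeasurableSpace.comap (Z i p.1 p.2) inferInstance) ℙ →
        ∀ R z : ℝ, R₀ ≤ R → z₀ ≤ z →
        ℙ {ω | ∃ j : ℤ, jmaxDef C₄ R M z zmax < j ∧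
              ∃ k : Fin (M + 1) → ℤ, k 0 = 0 ∧ (tau1 k : ℝ) ≤ R * M ∧
                0 < ∑ i : Fin M, Zdyad j (Z i (k i.castSucc) (k i.succ) ω)} ≤
          ENNReal.ofReal (C₅ * Real.exp (-C₆ * z ^ β - C₆ * (z / zmax) * zmax ^ β)) := by
  refine ⟨C₁, C₂ / 8, 2 / β, hC₁, by positivity, by positivity, ?_⟩
  intro C₄ hC₄
  refine ⟨max 9 (Real.exp (8 / C₂)), 1, ?_⟩
  intro Ω _inst hprob M hM Z zmax hzmax hmeas htail hbdd _hind R z hR hz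
  haveI := hprob
  -- basic bounds
  have hM1 : (1 : ℝ) ≤ M := by exact_mod_cast hM
  have hR9 : (9 : ℝ) ≤ R := le_trans (le_max_left _ _) hR
  have hRM : (9 : ℝ) ≤ R * M := by
    have h0 : R * 1 ≤ R * M := mul_le_mul_of_nonneg_left hM1 (by linarith)
    linarith
  have hRMpos : (0 : ℝ) < R * M := by linarith
  set L := Real.log (R * (M : ℝ)) with hL
  have hL9 : Real.log 9 ≤ L := Real.log_le_log (by norm_num) hRM
  have hexp9 : Real.exp 1 ≤ 9 := le_trans (le_of_lt Real.exp_one_lt_d9) (by norm_num)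
  have hL1 : (1 : ℝ) ≤ L := by
    calc (1 : ℝ) = Real.log (Real.exp 1) := (Real.log_exp 1).symm
      _ ≤ Real.log 9 := Real.log_le_log (Real.exp_pos 1) hexp9
      _ ≤ L := hL9
  have hL8 : 8 / C₂ ≤ L := by
    have h1 : Real.exp (8 / C₂) ≤ R := le_trans (le_max_right _ _) hR
    calc 8 / C₂ = Real.log (Real.exp (8 / C₂)) := (Real.log_exp _).symm
      _ ≤ Real.log R := Real.log_le_log (Real.exp_pos _) h1
      _ ≤ L := by
          refine Real.log_le_log (by linarith [Real.exp_pos (8 / C₂)]) ?_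
          have h0 : R * 1 ≤ R * M := mul_le_mul_of_nonneg_left hM1 (by linarith)
          linarith
  have hC₄pos : 0 < C₄ := lt_of_lt_of_le (by positivity) hC₄
  set a := L ^ C₄ with ha
  have ha1 : (1 : ℝ) ≤ a := Real.one_le_rpow hL1 hC₄pos.le
  have hz1 : (1 : ℝ) ≤ z := hz
  set m := min (Real.log (R * (M : ℝ)) ^ C₄ + z) zmax with hm
  have hmpos : 0 < m := lt_min (by linarith) hzmax
  set jm := jmaxDef C₄ R (M : ℝ) z zmax with hjmdef
  have hjm' : jm = ⌈Real.logb 2 m⌉ := rfl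
  have h2jm : m ≤ (2 : ℝ) ^ jm := by
    have h1 : Real.logb 2 m ≤ (jm : ℝ) := by rw [hjm']; exact_mod_cast Int.le_ceil _
    calc m = (2 : ℝ) ^ Real.logb 2 m := (Real.rpow_logb (by norm_num) (by norm_num) hmpos).symm
      _ ≤ (2 : ℝ) ^ ((jm : ℤ) : ℝ) := Real.rpow_le_rpow_of_exponent_le one_le_two h1
      _ = (2 : ℝ) ^ jm := Real.rpow_intCast 2 jm
  set t := (2 : ℝ) ^ (jm + 1) with htdef
  have htm : 2 * m ≤ t := by
    rw [htdef, zpow_add_one₀ (two_ne_zero)]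
    linarith [h2jm]
  have htpos : 0 < t := by rw [htdef]; positivity
  set N := ⌊R * (M : ℝ)⌋ with hN
  have hN9 : 9 ≤ N := by
    rw [hN]; exact Int.le_floor.mpr (by exact_mod_cast hRM)
  set T : Finset ℤ := Finset.Icc (-N) N with hT
  -- inclusion in a finite union of tail events
  have hsub : {ω | ∃ j : ℤ, jm < j ∧
        ∃ k : Fin (M + 1) → ℤ, k 0 = 0 ∧ (tau1 k : ℝ) ≤ R * M ∧
          0 < ∑ i : Fin M, Zdyad j (Z i (k i.castSucc) (k i.succ) ω)} ⊆
      ⋃ i : Fin M, ⋃ p ∈ T ×ˢ T, {ω | t ≤ Z i p.1 p.2 ω} := by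
    intro ω hω
    obtain ⟨j, hj, k, hk0, hkτ, hksum⟩ := hω
    obtain ⟨i, -, hi⟩ := Finset.exists_lt_of_sum_lt
      (s := Finset.univ) (f := fun _ : Fin M => (0 : ℝ)) (by simpa using hksum)
    have hcond : (2 : ℝ) ^ j ≤ Z i (k i.castSucc) (k i.succ) ω := by
      by_contra hc
      have h0 : Zdyad j (Z i (k i.castSucc) (k i.succ) ω) = 0 := by
        rw [Zdyad, if_neg]; tauto
      rw [h0] at hi; exact lt_irrefl 0 hi
    have htle : t ≤ Z i (k i.castSucc) (k i.succ) ω :=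
      le_trans (zpow_le_zpow_right₀ one_le_two (by omega)) hcond
    have hktau : ∀ i' : Fin (M + 1), k i' ∈ T := by
      intro i'
      have h1 : |k i'| ≤ tau1 k := abs_le_tau1 k hk0 i'
      have h2 : tau1 k ≤ N := Int.le_floor.mpr hkτ
      have h3 := abs_le.mp (h1.trans h2)
      exact Finset.mem_Icc.mpr ⟨h3.1, h3.2⟩
    exact Set.mem_iUnion.mpr ⟨i, Set.mem_iUnion₂.mpr
      ⟨(k i.castSucc, k i.succ), Finset.mem_product.mpr ⟨hktau _, hktau _⟩, htle⟩⟩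
  have hbound : ℙ {ω | ∃ j : ℤ, jm < j ∧
        ∃ k : Fin (M + 1) → ℤ, k 0 = 0 ∧ (tau1 k : ℝ) ≤ R * M ∧
          0 < ∑ i : Fin M, Zdyad j (Z i (k i.castSucc) (k i.succ) ω)} ≤
      ∑ i : Fin M, ∑ p ∈ T ×ˢ T, ℙ {ω | t ≤ Z i p.1 p.2 ω} := by
    refine le_trans (measure_mono hsub) (le_trans (measure_iUnion_le _) ?_)
    rw [tsum_fintype]
    exact Finset.sum_le_sum fun i _ => measure_biUnion_finset_le _ _
  by_cases hcase : zmax ≤ Real.log (R * (M : ℝ)) ^ C₄ + z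
  · -- every term is a null set
    have hmz' : m = zmax := min_eq_right hcase
    have hnull : ∀ (i : Fin M) (p : ℤ × ℤ), ℙ {ω | t ≤ Z i p.1 p.2 ω} = 0 := by
      intro i p
      have hset : {ω | t ≤ Z i p.1 p.2 ω} ⊆ {ω | Z i p.1 p.2 ω ≤ zmax}ᶜ := by
        intro ω hω
        simp only [Set.mem_compl_iff, Set.mem_setOf_eq, not_le]
        have hzt : zmax < t := by
          have := htm; rw [hmz'] at this; linarith
        exact lt_of_lt_of_le hzt hω
      refine measure_mono_null hset ?_
      have hmeas' : MeasurableSet {ω | Z i p.1 p.2 ω ≤ zmax} :=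
        measurableSet_le (hmeas i p.1 p.2) measurable_const
      rw [measure_compl hmeas' (measure_ne_top _ _), hbdd i p.1 p.2, measure_univ]
      simp
    have hzero : (∑ i : Fin M, ∑ p ∈ T ×ˢ T, ℙ {ω | t ≤ Z i p.1 p.2 ω}) = 0 := by
      refine Finset.sum_eq_zero fun i _ => Finset.sum_eq_zero fun p _ => hnull i p
    exact le_trans hbound (by rw [hzero]; exact zero_le)
  · -- case min = a + z
    push_neg at hcase
    have hmz' : m = a + z := min_eq_left hcase.le
    have hzzmax : z < zmax := by
      calc z ≤ a + z := by linarith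
        _ < zmax := hcase
    set n : ℕ := M * (T ×ˢ T).card with hn
    have hNle : ((N : ℝ)) ≤ R * M := Int.floor_le _
    have hTcardZ : (T.card : ℤ) = 2 * N + 1 := by
      rw [hT, Int.card_Icc]; omega
    have hTcard : (T.card : ℝ) ≤ 3 * (R * M) := by
      have h2 : (T.card : ℝ) = 2 * (N : ℝ) + 1 := by exact_mod_cast hTcardZ
      rw [h2]; linarith
    have hncard : (n : ℝ) ≤ 9 * (R * M) ^ 3 := by
      have hTnn : (0 : ℝ) ≤ (T.card : ℝ) := Nat.cast_nonneg _
      have hMle : (M : ℝ) ≤ R * M := by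
        have h0 : 1 * (M : ℝ) ≤ R * M :=
          mul_le_mul_of_nonneg_right (by linarith) (by linarith)
        linarith
      have e1 : ((T ×ˢ T).card : ℝ) = (T.card : ℝ) * T.card := by
        rw [Finset.card_product]; push_cast; ring
      have e2 : (T.card : ℝ) * T.card ≤ (3 * (R * M)) * (3 * (R * M)) :=
        mul_le_mul hTcard hTcard hTnn (by positivity)
      have e3 : (n : ℝ) = (M : ℝ) * ((T ×ˢ T).card : ℝ) := by rw [hn]; push_cast; ring
      rw [e3, e1]
      calc (M : ℝ) * ((T.card : ℝ) * T.card)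
          ≤ (R * M) * ((3 * (R * M)) * (3 * (R * M))) :=
            mul_le_mul hMle e2 (by positivity) (by positivity)
        _ = 9 * (R * M) ^ 3 := by ring
    have hn1 : 1 ≤ n := by
      have hT1 : 0 < T.card := Finset.card_pos.mpr ⟨0, Finset.mem_Icc.mpr ⟨by omega, by omega⟩⟩
      have h2 : 0 < (T ×ˢ T).card := by rw [Finset.card_product]; exact Nat.mul_pos hT1 hT1
      rw [hn]; exact Nat.mul_pos (by omega) h2
    have hnpos : (0 : ℝ) < n := by exact_mod_cast hn1
    -- log n ≤ 4 L
    have hlogn : Real.log n ≤ 4 * L := by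
      have h1 : Real.log n ≤ Real.log (9 * (R * M) ^ 3) :=
        Real.log_le_log hnpos hncard
      have h2 : Real.log (9 * (R * M) ^ 3) = Real.log 9 + 3 * L := by
        rw [Real.log_mul (by norm_num) (by positivity), Real.log_pow]
        push_cast; rw [hL]
      linarith
    -- key real exponent inequality
    have hab : a ≤ m := by rw [hmz']; linarith
    have hzm : z ≤ m := by rw [hmz']; linarith
    have hmt : m ≤ t := le_trans (by linarith) htm
    have htβ : m ^ β ≤ t ^ β := Real.rpow_le_rpow hmpos.le hmt hβ0.le
    have haβ : a ^ β ≤ m ^ β := Real.rpow_le_rpow (by linarith) hab hβ0.le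
    have hzβ : z ^ β ≤ m ^ β := Real.rpow_le_rpow (by linarith) hzm hβ0.le
    have haL : L ^ (2 : ℝ) ≤ a ^ β := by
      have h1 : a ^ β = L ^ (C₄ * β) := by
        rw [ha, ← Real.rpow_mul (by linarith)]
      have h2 : (2 : ℝ) ≤ C₄ * β := by
        have := (div_le_iff₀ hβ0).mp hC₄; linarith
      rw [h1]
      exact Real.rpow_le_rpow_of_exponent_le hL1 h2
    have hL2 : L ^ (2 : ℝ) = L * L := by
      rw [show (2 : ℝ) = ((2 : ℕ) : ℝ) by norm_num, Real.rpow_natCast]; ring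
    have h4L : 4 * L ≤ (C₂ / 2) * (L ^ (2 : ℝ)) := by
      rw [hL2]
      have h8 : 8 ≤ C₂ * L := by
        have := (div_le_iff₀ hC₂).mp hL8; linarith
      have hh : 0 ≤ (C₂ * L - 8) * L := mul_nonneg (by linarith) (by linarith)
      nlinarith [hh]
    -- (z/zmax) * zmax^β ≤ z^β
    have hfrac : (z / zmax) * zmax ^ β ≤ z ^ β := by
      rw [div_mul_eq_mul_div, div_le_iff₀ hzmax]
      have h1 : z ^ ((1 : ℝ) - β) ≤ zmax ^ ((1 : ℝ) - β) :=
        Real.rpow_le_rpow (by linarith) hzzmax.le (by linarith)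
      have h2 : z = z ^ β * z ^ ((1 : ℝ) - β) := by
        rw [← Real.rpow_add (by linarith)]; norm_num
      have h3 : zmax ^ ((1 : ℝ) - β) * zmax ^ β = zmax := by
        rw [← Real.rpow_add hzmax]; norm_num
      have hzmβ : (0 : ℝ) ≤ zmax ^ β := Real.rpow_nonneg hzmax.le β
      have hzβ' : (0 : ℝ) ≤ z ^ β := Real.rpow_nonneg (by linarith) β
      calc z * zmax ^ β = z ^ β * z ^ ((1 : ℝ) - β) * zmax ^ β := by rw [← h2]
        _ ≤ z ^ β * zmax ^ ((1 : ℝ) - β) * zmax ^ β :=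
            mul_le_mul_of_nonneg_right (mul_le_mul_of_nonneg_left h1 hzβ') hzmβ
        _ = z ^ β * zmax := by rw [mul_assoc, h3]
    -- the main real inequality
    have hreal : (n : ℝ) * (C₁ * Real.exp (-C₂ * t ^ β)) ≤
        C₁ * Real.exp (-(C₂ / 8) * z ^ β - C₂ / 8 * (z / zmax) * zmax ^ β) := by
      have hexp1 : (n : ℝ) * Real.exp (-C₂ * t ^ β) ≤
          Real.exp (4 * L - C₂ * t ^ β) := by
        have hn' : (n : ℝ) ≤ Real.exp (4 * L) := by
          calc (n : ℝ) = Real.exp (Real.log n) := (Real.exp_log hnpos).symm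
            _ ≤ Real.exp (4 * L) := Real.exp_le_exp.mpr hlogn
        calc (n : ℝ) * Real.exp (-C₂ * t ^ β)
            ≤ Real.exp (4 * L) * Real.exp (-C₂ * t ^ β) :=
              mul_le_mul_of_nonneg_right hn' (Real.exp_nonneg _)
          _ = Real.exp (4 * L + -C₂ * t ^ β) := (Real.exp_add _ _).symm
          _ = Real.exp (4 * L - C₂ * t ^ β) := by ring_nf
      have hexp2 : 4 * L - C₂ * t ^ β ≤
          -(C₂ / 8) * z ^ β - C₂ / 8 * (z / zmax) * zmax ^ β := by
        have h1 : C₂ * m ^ β ≤ C₂ * t ^ β := mul_le_mul_of_nonneg_left htβ hC₂.le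
        have h2 : (a ^ β + z ^ β) / 2 ≤ m ^ β := by linarith [haβ, hzβ]
        have hB : C₂ * ((a ^ β + z ^ β) / 2) ≤ C₂ * m ^ β :=
          mul_le_mul_of_nonneg_left h2 hC₂.le
        have hA : (C₂ / 2) * (L ^ (2 : ℝ)) ≤ (C₂ / 2) * a ^ β :=
          mul_le_mul_of_nonneg_left haL (by positivity)
        have h3 : (C₂ / 8) * ((z / zmax) * zmax ^ β) ≤ (C₂ / 8) * z ^ β :=
          mul_le_mul_of_nonneg_left hfrac (by positivity)
        have hzb0 : 0 ≤ C₂ * z ^ β :=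
          mul_nonneg hC₂.le (Real.rpow_nonneg (by linarith) β)
        linarith [h4L, hA, hB, h1, h3, hzb0]
      calc (n : ℝ) * (C₁ * Real.exp (-C₂ * t ^ β))
          = C₁ * ((n : ℝ) * Real.exp (-C₂ * t ^ β)) := by ring
        _ ≤ C₁ * Real.exp (4 * L - C₂ * t ^ β) :=
            mul_le_mul_of_nonneg_left hexp1 hC₁.le
        _ ≤ C₁ * Real.exp (-(C₂ / 8) * z ^ β - C₂ / 8 * (z / zmax) * zmax ^ β) :=
            mul_le_mul_of_nonneg_left (Real.exp_le_exp.mpr hexp2) hC₁.le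
    -- assemble in ENNReal
    refine le_trans hbound ?_
    have hsum2 : (∑ i : Fin M, ∑ p ∈ T ×ˢ T, ℙ {ω | t ≤ Z i p.1 p.2 ω}) ≤
        (n : ENNReal) * ENNReal.ofReal (C₁ * Real.exp (-C₂ * t ^ β)) := by
      have step : (∑ i : Fin M, ∑ p ∈ T ×ˢ T, ℙ {ω | t ≤ Z i p.1 p.2 ω}) ≤
          ∑ _ : Fin M, ∑ _ ∈ T ×ˢ T, ENNReal.ofReal (C₁ * Real.exp (-C₂ * t ^ β)) :=
        Finset.sum_le_sum fun i _ => Finset.sum_le_sum fun p _ => htail i p.1 p.2 t htpos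
      refine le_trans step (le_of_eq ?_)
      rw [Finset.sum_const, Finset.sum_const, Finset.card_univ, Fintype.card_fin,
        nsmul_eq_mul, nsmul_eq_mul, hn, Nat.cast_mul]
      ring
    refine le_trans hsum2 ?_
    rw [← ENNReal.ofReal_natCast n, ← ENNReal.ofReal_mul (Nat.cast_nonneg n)]
    exact ENNReal.ofReal_le_ofReal hreal
end

section
/- Fix an integer K ≥ 1 and reals H₀ > 0, c' > 0 and θ ∈ (0,1). There exist ε > 0 (depending only on K and H₀) and constants c > 0 and M₀ (depending only on K, H₀, c' and θ) such that the following holds for every integer M ≥ M₀. Let G_{i,j} (1 ≤ i ≤ M, j ∈ ℤ) be events with the K-range independence property and ℙ(G_{i,j}) ≥ 1 − ε for all i, j, and let J₀ = 0, J₁, …, J_M be ℤ-valued random variables on the same probability space with ℙ( Σ_{i=1}^M |J_i − J_{i−1}| ≥ H₀·M ) ≤ exp(−c'·M^{θ/4}). Then ℙ( Σ_{i=1}^M 1_{G_{i,J_i}} ≥ (99/100)·M ) ≥ 1 − exp(−c·M^{θ/4}). -/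
open MeasureTheory ProbabilityTheory Real
open scoped ProbabilityTheory Classical

lemma stmt7_compl_prod {Ω : Type*} [MeasurableSpace Ω] {μ : Measure Ω} {r : ℕ} {s : Fin r → Set Ω}
    (h : iIndepSet s μ) : μ (⋂ a, (s a)ᶜ) = ∏ a, μ (s a)ᶜ := by
  have := (iIndepSet_iff s μ).1 h Finset.univ (f := fun a => (s a)ᶜ)
    (fun i _ => (MeasurableSpace.measurableSet_generateFrom (Set.mem_singleton _)).compl)
  simpa using this

lemma stmt7_choose_le_two_pow (n k : ℕ) : n.choose k ≤ 2 ^ n := by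
  rcases le_or_gt k n with h | h
  · calc n.choose k ≤ ∑ j ∈ Finset.range (n+1), n.choose j :=
        Finset.single_le_sum (f := fun j => n.choose j) (fun _ _ => Nat.zero_le _)
          (Finset.mem_range.2 (by omega))
    _ = 2 ^ n := Nat.sum_range_choose n
  · simp [Nat.choose_eq_zero_of_lt h]

lemma stmt7_two_pow_le_exp (n : ℕ) : (2:ℝ) ^ n ≤ Real.exp n := by
  have h2 : (2:ℝ) ≤ Real.exp 1 := by have := Real.add_one_le_exp 1; linarith
  calc (2:ℝ) ^ n ≤ (Real.exp 1) ^ n := pow_le_pow_left₀ (by norm_num) h2 n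
    _ = Real.exp n := by rw [← Real.exp_nat_mul]; ring_nf

lemma stmt7_mod_spacing {K x y : ℕ} (hK : 1 ≤ K) (hne : x ≠ y) (hx : x % K = y % K) :
    (K:ℤ) ≤ |(x:ℤ) - (y:ℤ)| := by
  wlog h : y < x generalizing x y
  · have := this hne.symm hx.symm (by omega)
    rwa [abs_sub_comm]
  have hdvd : K ∣ x - y := (Nat.modEq_iff_dvd' h.le).1 hx.symm
  have hle : K ≤ x - y := Nat.le_of_dvd (by omega) hdvd
  have h2 : (x:ℤ) - y = ((x - y : ℕ) : ℤ) := by omega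
  rw [h2, abs_of_nonneg (by positivity)]
  exact_mod_cast hle

lemma stmt7_perpath {Ω : Type} [MeasureSpace Ω] (_hprob : IsProbabilityMeasure (ℙ : Measure Ω))
    {K M L m : ℕ} (hK : 1 ≤ K) (hLm : L = m / K) {ε : ℝ} (hε0 : 0 ≤ ε) (hε1 : ε ≤ 1)
    (G : Fin M → ℤ → Set Ω) (hGmeas : ∀ i j, MeasurableSet (G i j))
    (hGind : ∀ (r : ℕ) (s : Fin r → Fin M × ℤ),
      (∀ a b, a ≠ b → (K : ℤ) ≤ |(((s a).1 : ℕ) : ℤ) - (((s b).1 : ℕ) : ℤ)|) →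
      iIndepSet (fun a => G (s a).1 (s a).2) ℙ)
    (hGprob : ∀ (i : Fin M) (j : ℤ), ENNReal.ofReal (1 - ε) ≤ ℙ (G i j))
    (p : Fin M → ℤ) :
    ℙ {ω | m ≤ (Finset.univ.filter (fun i : Fin M => ω ∉ G i (p i))).card}
      ≤ (K : ENNReal) * ((2^M : ℕ) : ENNReal) * ENNReal.ofReal ε ^ L := by
  classical
  set cl : ℕ → Finset (Fin M) := fun r => Finset.univ.filter (fun i => i.1 % K = r) with hcl
  -- cover
  have hsub : {ω | m ≤ (Finset.univ.filter (fun i : Fin M => ω ∉ G i (p i))).card}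
      ⊆ ⋃ r ∈ Finset.range K, ⋃ T ∈ Finset.powersetCard L (cl r), (⋂ i ∈ T, (G i (p i))ᶜ) := by
    intro ω hω
    simp only [Set.mem_setOf_eq] at hω
    set Fl := Finset.univ.filter (fun i : Fin M => ω ∉ G i (p i)) with hFl
    have hfib : ∑ r ∈ Finset.range K, (Fl.filter (fun i => i.1 % K = r)).card = Fl.card :=
      (Finset.card_eq_sum_card_fiberwise
        (fun i _ => Finset.mem_range.2 (Nat.mod_lt _ (by omega)))).symm
    have hex : ∃ r ∈ Finset.range K, L ≤ (Fl.filter (fun i => i.1 % K = r)).card := by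
      by_contra hcon
      push_neg at hcon
      have h1 : ∑ r ∈ Finset.range K, ((Fl.filter (fun i => i.1 % K = r)).card + 1)
          ≤ ∑ _r ∈ Finset.range K, (m / K) :=
        Finset.sum_le_sum (fun r hr => by have h2 := hcon r hr; omega)
      have hKL := Nat.div_add_mod m K
      have hmod : m % K < K := Nat.mod_lt m (by omega)
      simp only [Finset.sum_add_distrib, Finset.sum_const, Finset.card_range, smul_eq_mul,
        mul_one] at h1
      omega
    obtain ⟨r, hr, hLr⟩ := hex
    obtain ⟨T, hTsub, hTcard⟩ := Finset.exists_subset_card_eq hLr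
    refine Set.mem_biUnion hr (Set.mem_biUnion (Finset.mem_powersetCard.2 ⟨?_, hTcard⟩) ?_)
    · exact hTsub.trans (Finset.filter_subset_filter _ (Finset.subset_univ Fl))
    · simp only [Set.mem_iInter]
      intro i hi
      have h2 := Finset.mem_filter.1 (hTsub hi)
      have h3 := Finset.mem_filter.1 h2.1
      exact h3.2
  -- per-T bound
  have hT : ∀ r : ℕ, ∀ T ∈ Finset.powersetCard L (cl r),
      ℙ (⋂ i ∈ T, (G i (p i))ᶜ) ≤ ENNReal.ofReal ε ^ L := by
    intro r T hTm
    obtain ⟨hTsub, hTcard⟩ := Finset.mem_powersetCard.1 hTm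
    set e := T.orderIsoOfFin hTcard with he
    set s : Fin L → Fin M × ℤ := fun a => (((e a : Fin M)), p (e a)) with hs
    have hspace : ∀ a b, a ≠ b → (K:ℤ) ≤ |(((s a).1 : ℕ):ℤ) - (((s b).1 : ℕ):ℤ)| := by
      intro a b hab
      have h1 : ((e a : Fin M)).1 ≠ ((e b : Fin M)).1 := by
        intro h
        exact hab (e.injective (Subtype.coe_injective (Fin.ext h)))
      have hma : ((e a : Fin M)).1 % K = r := by
        have := Finset.mem_filter.1 (hTsub (e a).2)
        exact this.2
      have hmb : ((e b : Fin M)).1 % K = r := by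
        have := Finset.mem_filter.1 (hTsub (e b).2)
        exact this.2
      simp only [hs]
      exact stmt7_mod_spacing hK h1 (hma.trans hmb.symm)
    have hind := hGind L s hspace
    have hprod := stmt7_compl_prod hind
    have hsub2 : (⋂ i ∈ T, (G i (p i))ᶜ) ⊆ ⋂ a : Fin L, (G (s a).1 (s a).2)ᶜ := by
      refine Set.subset_iInter (fun a => ?_)
      exact Set.biInter_subset_of_mem (e a).2
    have hfac : ∀ a : Fin L, ℙ ((G (s a).1 (s a).2)ᶜ) ≤ ENNReal.ofReal ε := by
      intro a
      rw [prob_compl_eq_one_sub (hGmeas _ _)]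
      have h1 : (1:ENNReal) - ℙ (G (s a).1 (s a).2) ≤ 1 - ENNReal.ofReal (1 - ε) :=
        tsub_le_tsub_left (hGprob _ _) 1
      refine h1.trans ?_
      rw [tsub_le_iff_right, ← ENNReal.ofReal_add hε0 (by linarith)]
      simp
    calc ℙ (⋂ i ∈ T, (G i (p i))ᶜ) ≤ ℙ (⋂ a : Fin L, (G (s a).1 (s a).2)ᶜ) :=
          measure_mono hsub2
      _ = ∏ a : Fin L, ℙ ((G (s a).1 (s a).2)ᶜ) := hprod
      _ ≤ ∏ _a : Fin L, ENNReal.ofReal ε := Finset.prod_le_prod' (fun a _ => hfac a)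
      _ = ENNReal.ofReal ε ^ L := by simp
  -- sum up
  have hcard : ∀ r : ℕ, ((Finset.powersetCard L (cl r)).card : ℕ) ≤ 2 ^ M := by
    intro r
    rw [Finset.card_powersetCard]
    calc (cl r).card.choose L ≤ 2 ^ (cl r).card := stmt7_choose_le_two_pow _ _
      _ ≤ 2 ^ M := Nat.pow_le_pow_right (by norm_num)
          (le_trans (Finset.card_filter_le _ _) (by simp))
  calc ℙ {ω | m ≤ (Finset.univ.filter (fun i : Fin M => ω ∉ G i (p i))).card}
      ≤ ℙ (⋃ r ∈ Finset.range K, ⋃ T ∈ Finset.powersetCard L (cl r), (⋂ i ∈ T, (G i (p i))ᶜ)) :=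
        measure_mono hsub
    _ ≤ ∑ r ∈ Finset.range K, ℙ (⋃ T ∈ Finset.powersetCard L (cl r), (⋂ i ∈ T, (G i (p i))ᶜ)) :=
        measure_biUnion_finset_le _ _
    _ ≤ ∑ r ∈ Finset.range K, ∑ T ∈ Finset.powersetCard L (cl r), ℙ (⋂ i ∈ T, (G i (p i))ᶜ) :=
        Finset.sum_le_sum (fun r _ => measure_biUnion_finset_le _ _)
    _ ≤ ∑ r ∈ Finset.range K, ∑ _T ∈ Finset.powersetCard L (cl r), ENNReal.ofReal ε ^ L :=
        Finset.sum_le_sum (fun r _ => Finset.sum_le_sum (fun T hTm => hT r T hTm))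
    _ = ∑ r ∈ Finset.range K, ((Finset.powersetCard L (cl r)).card : ENNReal) * ENNReal.ofReal ε ^ L := by
        simp [Finset.sum_const, nsmul_eq_mul]
    _ ≤ ∑ _r ∈ Finset.range K, ((2^M : ℕ) : ENNReal) * ENNReal.ofReal ε ^ L :=
        Finset.sum_le_sum (fun r _ => mul_le_mul_left (by exact_mod_cast Nat.cast_le.2 (hcard r)) _)
    _ = (K : ENNReal) * ((2^M : ℕ) : ENNReal) * ENNReal.ofReal ε ^ L := by
        simp [Finset.sum_const, Finset.card_range, nsmul_eq_mul, mul_assoc]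

open Finset in
lemma stmt7_count (M N : ℕ) :
    ((Finset.Icc (fun _ => -(N:ℤ)) (fun _ => (N:ℤ)) : Finset (Fin M → ℤ)).filter
      (fun d => ∑ i, (d i).natAbs ≤ N)).card ≤ 2 ^ M * 2 ^ (N + M) := by
  classical
  set D := ((Finset.Icc (fun _ => -(N:ℤ)) (fun _ => (N:ℤ)) : Finset (Fin M → ℤ)).filter
      (fun d => ∑ i, (d i).natAbs ≤ N)) with hD
  -- encoding
  have key : ∀ d ∈ D, ∀ v, v < M →
      (∑ k ∈ range (v+1), (if h : k < M then (d ⟨k, h⟩).natAbs else 0)) + v < N + M := by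
    intro d hd v hv
    simp only [hD, mem_filter] at hd
    have h1 : (∑ k ∈ range (v+1), (if h : k < M then (d ⟨k, h⟩).natAbs else 0))
        ≤ ∑ k ∈ range M, (if h : k < M then (d ⟨k, h⟩).natAbs else 0) :=
      Finset.sum_le_sum_of_subset (Finset.range_subset_range.2 hv)
    have h2 : (∑ k ∈ range M, (if h : k < M then (d ⟨k, h⟩).natAbs else 0))
        = ∑ i : Fin M, (d i).natAbs := by
      rw [← Fin.sum_univ_eq_sum_range (fun k => (if h : k < M then (d ⟨k, h⟩).natAbs else 0)) M]
      exact Finset.sum_congr rfl (fun i _ => by simp [i.2])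
    omega
  set F : (Fin M → ℤ) → (Fin M → Bool) × Finset (Fin (N + M)) := fun d =>
    (fun i => decide (0 ≤ d i),
      if hd : ∀ v, v < M → (∑ k ∈ range (v+1), (if h : k < M then (d ⟨k, h⟩).natAbs else 0)) + v < N + M
      then Finset.image (fun i : Fin M =>
        (⟨(∑ k ∈ range (i.1+1), (if h : k < M then (d ⟨k, h⟩).natAbs else 0)) + i.1,
          hd i.1 i.2⟩ : Fin (N+M))) Finset.univ
      else ∅) with hF
  have hinj : Set.InjOn F D := by
    intro d hd d' hd' heq
    have hkd := key d hd
    have hkd' := key d' hd'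
    simp only [hF, Prod.mk.injEq, dif_pos hkd, dif_pos hkd'] at heq
    obtain ⟨hsign, himg⟩ := heq
    -- the two strictly monotone enumerations agree
    set g : Fin M → Fin (N+M) := fun i =>
      (⟨(∑ k ∈ range (i.1+1), (if h : k < M then (d ⟨k, h⟩).natAbs else 0)) + i.1, hkd i.1 i.2⟩)
      with hg
    set g' : Fin M → Fin (N+M) := fun i =>
      (⟨(∑ k ∈ range (i.1+1), (if h : k < M then (d' ⟨k, h⟩).natAbs else 0)) + i.1, hkd' i.1 i.2⟩)
      with hg'
    have hmono : StrictMono g := by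
      intro a b hab
      simp only [hg, Fin.mk_lt_mk, Fin.lt_def]
      have : (∑ k ∈ range (a.1+1), (if h : k < M then (d ⟨k, h⟩).natAbs else 0))
          ≤ (∑ k ∈ range (b.1+1), (if h : k < M then (d ⟨k, h⟩).natAbs else 0)) :=
        Finset.sum_le_sum_of_subset (Finset.range_subset_range.2 (by omega))
      have hab' : a.1 < b.1 := hab
      omega
    have hmono' : StrictMono g' := by
      intro a b hab
      simp only [hg', Fin.mk_lt_mk, Fin.lt_def]
      have : (∑ k ∈ range (a.1+1), (if h : k < M then (d' ⟨k, h⟩).natAbs else 0))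
          ≤ (∑ k ∈ range (b.1+1), (if h : k < M then (d' ⟨k, h⟩).natAbs else 0)) :=
        Finset.sum_le_sum_of_subset (Finset.range_subset_range.2 (by omega))
      have hab' : a.1 < b.1 := hab
      omega
    have hcard : (Finset.image g Finset.univ).card = M := by
      rw [Finset.card_image_of_injective _ hmono.injective, card_univ, Fintype.card_fin]
    have hgmem : ∀ x, g x ∈ Finset.image g Finset.univ := fun x =>
      Finset.mem_image_of_mem _ (mem_univ x)
    have hg'mem : ∀ x, g' x ∈ Finset.image g Finset.univ := fun x => by
      rw [himg]; exact Finset.mem_image_of_mem _ (mem_univ x)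
    have : g = g' := by
      rw [Finset.orderEmbOfFin_unique hcard hgmem hmono,
        Finset.orderEmbOfFin_unique hcard hg'mem hmono']
    -- deduce prefix sums equal
    have hpre : ∀ v (hv : v < M),
        (∑ k ∈ range (v+1), (if h : k < M then (d ⟨k, h⟩).natAbs else 0))
        = (∑ k ∈ range (v+1), (if h : k < M then (d' ⟨k, h⟩).natAbs else 0)) := by
      intro v hv
      have := congrFun this ⟨v, hv⟩
      simp only [hg, hg', Fin.mk.injEq] at this
      omega
    have habs : ∀ v (hv : v < M), (d ⟨v, hv⟩).natAbs = (d' ⟨v, hv⟩).natAbs := by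
      intro v hv
      cases v with
      | zero => have := hpre 0 hv; simpa [dif_pos hv] using this
      | succ u =>
          have h1 := hpre (u+1) hv
          have h2 := hpre u (by omega)
          have e1 := Finset.sum_range_succ (fun k => (if h : k < M then (d ⟨k, h⟩).natAbs else 0)) (u+1)
          have e2 := Finset.sum_range_succ (fun k => (if h : k < M then (d' ⟨k, h⟩).natAbs else 0)) (u+1)
          simp only [dif_pos hv] at e1 e2
          omega
    funext i
    have h1 := habs i.1 i.2
    have h2 := congrFun hsign i
    simp only [decide_eq_decide] at h2
    have h1' : (d i).natAbs = (d' i).natAbs := h1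
    omega
  have := Finset.card_le_card_of_injOn F (fun a _ => Finset.mem_univ (F a)) hinj
  simpa [Fintype.card_prod, Fintype.card_finset, Fintype.card_fun] using this

set_option maxHeartbeats 2000000 in
theorem statement7 (K : ℕ) (H₀ : ℝ) (hK : 1 ≤ K) (hH₀ : 0 < H₀) :
    ∃ ε : ℝ, 0 < ε ∧
      ∀ c' θ : ℝ, 0 < c' → 0 < θ → θ < 1 →
      ∃ c : ℝ, 0 < c ∧ ∃ M₀ : ℕ,
        ∀ M : ℕ, M₀ ≤ M →
        ∀ (Ω : Type) [MeasureSpace Ω], IsProbabilityMeasure (ℙ : Measure Ω) →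
        ∀ G : Fin M → ℤ → Set Ω,
        (∀ i j, MeasurableSet (G i j)) →
        -- K-range independence property
        (∀ (r : ℕ) (s : Fin r → Fin M × ℤ),
          (∀ a b, a ≠ b → (K : ℤ) ≤ |(((s a).1 : ℕ) : ℤ) - (((s b).1 : ℕ) : ℤ)|) →
          iIndepSet (fun a => G (s a).1 (s a).2) ℙ) →
        (∀ (i : Fin M) (j : ℤ), ENNReal.ofReal (1 - ε) ≤ ℙ (G i j)) →
        ∀ J : Fin (M + 1) → Ω → ℤ,
        (∀ i, Measurable (J i)) →
        (∀ ω, J 0 ω = 0) →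
        ℙ {ω | H₀ * M ≤ ((∑ i : Fin M, |J i.succ ω - J i.castSucc ω| : ℤ) : ℝ)} ≤
          ENNReal.ofReal (Real.exp (-c' * (M : ℝ) ^ (θ / 4))) →
        1 - ENNReal.ofReal (Real.exp (-c * (M : ℝ) ^ (θ / 4))) ≤
          ℙ {ω | (99 / 100 : ℝ) * M ≤
              ∑ i : Fin M, (G i (J i.succ ω)).indicator (fun _ => (1 : ℝ)) ω} := by
  classical
  set β : ℝ := 100 * (K:ℝ) * (H₀ + 10) with hβ
  have hβpos : 0 < β := by positivity
  refine ⟨Real.exp (-β), Real.exp_pos _, ?_⟩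
  intro c' θ hc' hθ hθ1
  set a := min c' 1 with ha
  have hapos : 0 < a := lt_min hc' one_pos
  set X : ℝ := max 1 (Real.log 2 / (a / 2) + 1) with hXdef
  have hX1 : (1:ℝ) ≤ X := le_max_left _ _
  refine ⟨a / 2, by positivity, max (max 100 (K + (⌈β⌉₊ + 1))) (⌈X ^ (4 / θ)⌉₊ + 1), ?_⟩
  intro M hM Ω _ hprob G hGmeas hGind hGprob J hJmeas hJ0 hA
  have hM100 : 100 ≤ M := le_trans (le_trans (le_max_left _ _) (le_max_left _ _)) hM
  have hMK : K + (⌈β⌉₊ + 1) ≤ M := le_trans (le_trans (le_max_right _ _) (le_max_left _ _)) hM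
  have hMX : X ^ (4 / θ) ≤ (M:ℝ) := by
    have h1 : (⌈X ^ (4 / θ)⌉₊ + 1 : ℕ) ≤ M := le_trans (le_max_right _ _) hM
    have h2 := Nat.le_ceil (X ^ (4 / θ))
    have h3 : ((⌈X ^ (4 / θ)⌉₊ + 1 : ℕ) : ℝ) ≤ M := by exact_mod_cast h1
    push_cast at h3
    linarith
  have hMβ : β + 1 ≤ (M:ℝ) := by
    have h2 := Nat.le_ceil β
    have h3 : ((K + (⌈β⌉₊ + 1) : ℕ) : ℝ) ≤ M := by exact_mod_cast hMK
    push_cast at h3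
    have h4 : (0:ℝ) ≤ K := by positivity
    linarith
  set m : ℕ := M / 100 + 1 with hm
  set L : ℕ := m / K with hL
  set N : ℕ := ⌈H₀ * M⌉₊ with hN
  set ε : ℝ := Real.exp (-β) with hε
  have hε0 : 0 ≤ ε := (Real.exp_pos _).le
  have hε1 : ε ≤ 1 := by
    rw [hε, Real.exp_le_one_iff]
    linarith
  set D : Finset (Fin M → ℤ) := (Finset.Icc (fun _ => -(N:ℤ)) (fun _ => (N:ℤ))).filter
      (fun d => ∑ i, (d i).natAbs ≤ N) with hD
  set cums : (Fin M → ℤ) → Fin M → ℤ :=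
      fun d i => ∑ k ∈ Finset.range (i.1+1), (if h : k < M then d ⟨k,h⟩ else 0) with hcums
  set P : Finset (Fin M → ℤ) := D.image cums with hP
  set Ep : (Fin M → ℤ) → Set Ω := fun p =>
      {ω | m ≤ (Finset.univ.filter (fun i : Fin M => ω ∉ G i (p i))).card} with hEp
  set A : Set Ω := {ω | H₀ * M ≤ ((∑ i : Fin M, |J i.succ ω - J i.castSucc ω| : ℤ) : ℝ)} with hAs
  set S : Set Ω := {ω | (99 / 100 : ℝ) * M ≤
      ∑ i : Fin M, (G i (J i.succ ω)).indicator (fun _ => (1 : ℝ)) ω} with hS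
  -- the covering of the bad event
  have hcover : Sᶜ ⊆ A ∪ ⋃ p ∈ P, Ep p := by
    intro ω hω
    by_cases hωA : ω ∈ A
    · exact Or.inl hωA
    refine Or.inr ?_
    have hω' : ∑ i : Fin M, (G i (J i.succ ω)).indicator (fun _ => (1:ℝ)) ω < (99/100:ℝ) * M := by
      have h := hω
      simp only [hS, Set.mem_compl_iff, Set.mem_setOf_eq, not_le] at h
      exact h
    have hnotA : ((∑ i : Fin M, |J i.succ ω - J i.castSucc ω| : ℤ) : ℝ) < H₀ * M := by
      simp only [hAs, Set.mem_setOf_eq, not_le] at hωA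
      exact hωA
    set d : Fin M → ℤ := fun i => J i.succ ω - J i.castSucc ω with hd
    have hZint : (∑ i : Fin M, |d i|) ≤ (N:ℤ) := by
      have h1 : H₀ * M ≤ (N:ℝ) := Nat.le_ceil _
      have h2 : ((∑ i : Fin M, |d i| : ℤ):ℝ) < (N:ℝ) := lt_of_lt_of_le hnotA h1
      exact_mod_cast h2.le
    have hdabs : ∀ i, |d i| ≤ (N:ℤ) := fun i =>
      le_trans (Finset.single_le_sum (f := fun i => |d i|) (fun j _ => abs_nonneg _)
        (Finset.mem_univ i)) hZint
    have hdD : d ∈ D := by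
      refine Finset.mem_filter.2 ⟨Finset.mem_Icc.2 ⟨fun i => ?_, fun i => ?_⟩, ?_⟩
      · have h5 := hdabs i
        rw [abs_le] at h5
        exact h5.1
      · have h5 := hdabs i
        rw [abs_le] at h5
        exact h5.2
      · have h2 : ((∑ i : Fin M, (d i).natAbs : ℕ) : ℤ) = ∑ i : Fin M, |d i| := by
          push_cast [Int.natCast_natAbs]
          rfl
        omega
    have hkey : ∀ v (hv : v < M), (∑ k ∈ Finset.range (v+1), (if h : k < M then d ⟨k,h⟩ else 0))
        = J ⟨v+1, Nat.succ_lt_succ hv⟩ ω := by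
      intro v
      induction v with
      | zero =>
        intro hv
        rw [Finset.sum_range_one, dif_pos hv]
        have h0 : J (Fin.castSucc ⟨0, hv⟩) ω = 0 := by
          have he : (Fin.castSucc (⟨0, hv⟩ : Fin M)) = 0 := rfl
          rw [he, hJ0]
        have h1 : J (Fin.succ (⟨0, hv⟩ : Fin M)) ω = J ⟨1, Nat.succ_lt_succ hv⟩ ω := rfl
        simp only [hd]
        rw [h0, h1, sub_zero]
      | succ u ih =>
        intro hv
        rw [Finset.sum_range_succ, ih (Nat.lt_of_succ_lt hv), dif_pos hv]
        have e1 : J (Fin.succ (⟨u+1, hv⟩ : Fin M)) ω = J ⟨u+2, Nat.succ_lt_succ hv⟩ ω := rfl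
        have e2 : J (Fin.castSucc (⟨u+1, hv⟩ : Fin M)) ω
            = J ⟨u+1, Nat.succ_lt_succ (Nat.lt_of_succ_lt hv)⟩ ω := rfl
        simp only [hd]
        rw [e1, e2]
        ring
    have hcumsJ : ∀ i : Fin M, cums d i = J i.succ ω := by
      intro i
      have h1 := hkey i.1 i.2
      have h2 : (Fin.succ i) = ⟨i.1+1, Nat.succ_lt_succ i.2⟩ := rfl
      show (∑ k ∈ Finset.range (i.1+1), (if h : k < M then d ⟨k,h⟩ else 0)) = J i.succ ω
      rw [h2]
      exact h1
    have hpP : cums d ∈ P := Finset.mem_image_of_mem _ hdD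
    refine Set.mem_biUnion hpP ?_
    show m ≤ (Finset.univ.filter (fun i : Fin M => ω ∉ G i (cums d i))).card
    have hsum : ∑ i : Fin M, (G i (J i.succ ω)).indicator (fun _ => (1:ℝ)) ω
        = ((Finset.univ.filter (fun i : Fin M => ω ∈ G i (cums d i))).card : ℝ) := by
      rw [← Finset.sum_boole]
      refine Finset.sum_congr rfl (fun i _ => ?_)
      rw [hcumsJ i, Set.indicator_apply]
    have hsplit : (Finset.univ.filter (fun i : Fin M => ω ∈ G i (cums d i))).card
        + (Finset.univ.filter (fun i : Fin M => ¬ (ω ∈ G i (cums d i)))).card = M := by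
      rw [Finset.card_filter_add_card_filter_not]
      simp
    have hdiv : ((M/100 : ℕ) : ℝ) ≤ (M:ℝ)/100 := Nat.cast_div_le
    have hgt : ((M/100:ℕ) : ℝ)
        < ((Finset.univ.filter (fun i : Fin M => ω ∉ G i (cums d i))).card : ℝ) := by
      have hωlt : ((Finset.univ.filter (fun i : Fin M => ω ∈ G i (cums d i))).card : ℝ)
          < 99/100 * M := by
        rw [← hsum]
        exact hω'
      have hc : (((Finset.univ.filter (fun i : Fin M => ω ∈ G i (cums d i))).card : ℕ) : ℝ)
          + (((Finset.univ.filter (fun i : Fin M => ω ∉ G i (cums d i))).card : ℕ) : ℝ)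
          = (M:ℝ) := by
        exact_mod_cast hsplit
      linarith
    have hnat : (M/100:ℕ) < (Finset.univ.filter (fun i : Fin M => ω ∉ G i (cums d i))).card := by
      exact_mod_cast hgt
    omega
  -- per-path probability bound
  have hEpb : ∀ p : Fin M → ℤ,
      ℙ (Ep p) ≤ (K : ENNReal) * ((2^M:ℕ) : ENNReal) * ENNReal.ofReal ε ^ L := by
    intro p
    simpa only [hEp] using stmt7_perpath hprob hK hL hε0 hε1 G hGmeas hGind hGprob p
  have hPcard : P.card ≤ 2^M * 2^(N+M) := le_trans Finset.card_image_le (stmt7_count M N)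
  -- assemble the union bound
  have hmain : ℙ Sᶜ ≤ ENNReal.ofReal (Real.exp (-c' * (M:ℝ)^(θ/4)))
      + ((2^M * 2^(N+M) * (K * 2^M) : ℕ) : ENNReal) * ENNReal.ofReal ε ^ L := by
    calc ℙ Sᶜ ≤ ℙ (A ∪ ⋃ p ∈ P, Ep p) := measure_mono hcover
      _ ≤ ℙ A + ℙ (⋃ p ∈ P, Ep p) := measure_union_le _ _
      _ ≤ ℙ A + ∑ p ∈ P, ℙ (Ep p) := add_le_add_right (measure_biUnion_finset_le _ _) _
      _ ≤ ℙ A + ∑ _p ∈ P, ((K:ENNReal) * ((2^M:ℕ):ENNReal) * ENNReal.ofReal ε ^ L) :=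
          add_le_add_right (Finset.sum_le_sum fun p _ => hEpb p) _
      _ = ℙ A + (P.card : ENNReal) * ((K:ENNReal) * ((2^M:ℕ):ENNReal) * ENNReal.ofReal ε ^ L) := by
          rw [Finset.sum_const, nsmul_eq_mul]
      _ ≤ ENNReal.ofReal (Real.exp (-c' * (M:ℝ)^(θ/4)))
          + ((2^M * 2^(N+M) : ℕ) : ENNReal)
            * ((K:ENNReal) * ((2^M:ℕ):ENNReal) * ENNReal.ofReal ε ^ L) :=
          add_le_add hA (mul_le_mul_left (by exact_mod_cast hPcard) _)
      _ = ENNReal.ofReal (Real.exp (-c' * (M:ℝ)^(θ/4)))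
          + ((2^M * 2^(N+M) * (K * 2^M) : ℕ) : ENNReal) * ENNReal.ofReal ε ^ L := by
          push_cast
          ring
  -- the real-number estimate for the combinatorial term
  have hR : ((2^M * 2^(N+M) * (K * 2^M) : ℕ) : ℝ) * ε ^ L ≤ Real.exp (-(M:ℝ)) := by
    have harith : (M:ℝ) + ((N:ℝ)+(M:ℝ)) + ((M:ℝ) + (M:ℝ)) + -(β * L) ≤ -(M:ℝ) := by
      have hN1 : (N:ℝ) ≤ H₀ * M + 1 := le_of_lt (Nat.ceil_lt_add_one (by positivity))
      have hKL : K * (m / K) + m % K = m := Nat.div_add_mod m K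
      have hmod : m % K < K := Nat.mod_lt m (by omega)
      have hKLr : (M:ℝ)/100 - K ≤ (K:ℝ) * L := by
        have hKL' : (K:ℝ) * (L:ℝ) + ((m % K : ℕ):ℝ) = m := by
          rw [hL]
          exact_mod_cast hKL
        have hmod' : ((m % K : ℕ):ℝ) < K := by exact_mod_cast hmod
        have hm' : (M:ℝ)/100 ≤ m := by
          have h6 : M ≤ 100 * m := by omega
          have h7 : (M:ℝ) ≤ 100 * (m:ℝ) := by exact_mod_cast h6
          linarith
        linarith
      have h2 : (H₀+10) * ((M:ℝ)/100 - K) ≤ (H₀+10) * ((K:ℝ)*L) :=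
        mul_le_mul_of_nonneg_left hKLr (by linarith)
      have h3 : β * (L:ℝ) = 100 * ((H₀+10) * ((K:ℝ)*L)) := by rw [hβ]; ring
      have h4 : 100 * ((H₀+10) * ((M:ℝ)/100 - K)) ≤ β * L := by
        rw [h3]
        linarith
      have h5 : 100 * ((H₀+10) * ((M:ℝ)/100 - K)) = H₀*(M:ℝ) + 10*(M:ℝ) - β := by
        rw [hβ]
        ring
      rw [h5] at h4
      linarith
    have hKexp : (K:ℝ) ≤ Real.exp (M:ℝ) := by
      have h1 : (K:ℝ) ≤ M := by exact_mod_cast le_trans (Nat.le_add_right _ _) hMK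
      have h2 := Real.add_one_le_exp (M:ℝ)
      linarith
    have hεL : ε ^ L = Real.exp (-(β * L)) := by
      rw [hε, ← Real.exp_nat_mul]
      ring_nf
    push_cast
    calc (2:ℝ)^M * 2^(N+M) * ((K:ℝ) * 2^M) * ε^L
        ≤ Real.exp (M:ℝ) * Real.exp ((N:ℝ)+(M:ℝ)) * (Real.exp (M:ℝ) * Real.exp (M:ℝ))
          * Real.exp (-(β*L)) := by
          rw [hεL]
          have b1 := stmt7_two_pow_le_exp M
          have b2 := stmt7_two_pow_le_exp (N+M)
          push_cast at b1 b2
          gcongr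
      _ = Real.exp ((M:ℝ) + ((N:ℝ)+(M:ℝ)) + ((M:ℝ) + (M:ℝ)) + -(β * L)) := by
          simp only [← Real.exp_add]
      _ ≤ Real.exp (-(M:ℝ)) := Real.exp_le_exp.2 harith
  have hterm : ((2^M * 2^(N+M) * (K * 2^M) : ℕ) : ENNReal) * ENNReal.ofReal ε ^ L
      ≤ ENNReal.ofReal (Real.exp (-(M:ℝ))) := by
    rw [← ENNReal.ofReal_pow hε0, ← ENNReal.ofReal_natCast, ← ENNReal.ofReal_mul (Nat.cast_nonneg _)]
    exact ENNReal.ofReal_le_ofReal hR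
  -- final exponential comparison
  set t : ℝ := (M:ℝ)^(θ/4) with ht
  have ht0 : 0 ≤ t := Real.rpow_nonneg (Nat.cast_nonneg _) _
  have hM1 : (1:ℝ) ≤ M := by
    have : (1:ℕ) ≤ M := by omega
    exact_mod_cast this
  have htM : t ≤ M := by
    calc t ≤ (M:ℝ)^(1:ℝ) := Real.rpow_le_rpow_of_exponent_le hM1 (by linarith)
      _ = M := Real.rpow_one _
  have htX : X ≤ t := by
    have h1 : (4/θ) * (θ/4) = 1 := by field_simp
    calc X = (X ^ (4/θ)) ^ (θ/4) := by
          rw [← Real.rpow_mul (by linarith : (0:ℝ) ≤ X), h1, Real.rpow_one]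
      _ ≤ t := by
          rw [ht]
          exact Real.rpow_le_rpow (Real.rpow_nonneg (by linarith) _) hMX (by positivity)
  have hsum2 : Real.exp (-c' * t) + Real.exp (-(M:ℝ)) ≤ Real.exp (-(a/2) * t) := by
    have h1 : Real.exp (-c' * t) ≤ Real.exp (-a * t) := by
      rw [Real.exp_le_exp]
      have hac : a ≤ c' := min_le_left _ _
      have h5 := mul_le_mul_of_nonneg_right hac ht0
      linarith
    have h2 : Real.exp (-(M:ℝ)) ≤ Real.exp (-a * t) := by
      rw [Real.exp_le_exp]
      have ha1 : a ≤ 1 := min_le_right _ _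
      have h5 := mul_le_mul_of_nonneg_right ha1 ht0
      linarith
    have hlog : Real.log 2 ≤ (a/2) * t := by
      have hX2 : Real.log 2 / (a/2) + 1 ≤ X := le_max_right _ _
      have h3 : Real.log 2 / (a/2) ≤ t := by linarith
      calc Real.log 2 = (Real.log 2 / (a/2)) * (a/2) := by field_simp
        _ ≤ t * (a/2) := mul_le_mul_of_nonneg_right h3 (by positivity)
        _ = (a/2) * t := mul_comm _ _
    have h4 : (2:ℝ) ≤ Real.exp ((a/2)*t) := by
      calc (2:ℝ) = Real.exp (Real.log 2) := (Real.exp_log (by norm_num)).symm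
        _ ≤ Real.exp ((a/2)*t) := Real.exp_le_exp.2 hlog
    calc Real.exp (-c' * t) + Real.exp (-(M:ℝ))
        ≤ Real.exp (-a*t) + Real.exp (-a*t) := add_le_add h1 h2
      _ = Real.exp (-a*t) * 2 := by ring
      _ ≤ Real.exp (-a*t) * Real.exp ((a/2)*t) :=
          mul_le_mul_of_nonneg_left h4 (Real.exp_pos _).le
      _ = Real.exp (-(a/2)*t) := by
          rw [← Real.exp_add]
          ring_nf
  have hfinal : ℙ Sᶜ ≤ ENNReal.ofReal (Real.exp (-(a/2) * t)) := by
    calc ℙ Sᶜ ≤ ENNReal.ofReal (Real.exp (-c' * t))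
        + ((2^M * 2^(N+M) * (K * 2^M) : ℕ) : ENNReal) * ENNReal.ofReal ε ^ L := hmain
      _ ≤ ENNReal.ofReal (Real.exp (-c' * t)) + ENNReal.ofReal (Real.exp (-(M:ℝ))) :=
          add_le_add_right hterm _
      _ = ENNReal.ofReal (Real.exp (-c' * t) + Real.exp (-(M:ℝ))) :=
          (ENNReal.ofReal_add (Real.exp_nonneg _) (Real.exp_nonneg _)).symm
      _ ≤ ENNReal.ofReal (Real.exp (-(a/2) * t)) := ENNReal.ofReal_le_ofReal hsum2
  have huniv : (1:ENNReal) ≤ ℙ S + ℙ Sᶜ := by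
    have h := measure_union_le (μ := (ℙ : Measure Ω)) S Sᶜ
    rw [Set.union_compl_self, measure_univ] at h
    exact h
  exact tsub_le_iff_right.2 (le_trans huniv (add_le_add_right hfinal _))
end

section
/- Let α > 0 and δ ∈ (0, 1) with 2·δ^α < 1/2. Let Q : [1, ∞) → (0, ∞) satisfy Q(m) ≤ (m/n)^α·Q(n) whenever 1 ≤ m ≤ n. Let A : [1, ∞) → [0, ∞) be bounded on bounded sets, and suppose there are n⋆ ≥ 1/δ and c₀ > 0 such that A(n') ≤ 2·sup_{1 ≤ m ≤ δ·n'} A(m) + c₀·Q(n') for every n' ≥ n⋆. Then there exists a constant D₁ > 0 such that A(n) ≤ D₁·Q(n) for all n ≥ 1. -/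
theorem statement10 (α δ : ℝ) (hα : 0 < α) (hδ0 : 0 < δ) (hδ1 : δ < 1)
    (hδα : 2 * δ ^ α < 1 / 2)
    (Q A : ℝ → ℝ)
    (hQpos : ∀ n : ℝ, 1 ≤ n → 0 < Q n)
    (hQmono : ∀ m n : ℝ, 1 ≤ m → m ≤ n → Q m ≤ (m / n) ^ α * Q n)
    (hA0 : ∀ n : ℝ, 1 ≤ n → 0 ≤ A n)
    (hAbdd : ∀ b : ℝ, ∃ B : ℝ, ∀ x : ℝ, 1 ≤ x → x ≤ b → A x ≤ B)
    (nstar c₀ : ℝ) (hnstar : 1 / δ ≤ nstar) (hc₀ : 0 < c₀)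
    (hrec : ∀ n' : ℝ, nstar ≤ n' →
      A n' ≤ 2 * sSup (A '' Set.Icc 1 (δ * n')) + c₀ * Q n') :
    ∃ D₁ : ℝ, 0 < D₁ ∧ ∀ n : ℝ, 1 ≤ n → A n ≤ D₁ * Q n := by
  have hnstar1 : (1 : ℝ) ≤ nstar := le_trans (by
    rw [le_div_iff₀ hδ0]; nlinarith) hnstar
  have hδnstar : (1 : ℝ) ≤ δ * nstar := by
    rw [div_le_iff₀ hδ0] at hnstar; linarith [hnstar]
  obtain ⟨B, hB⟩ := hAbdd nstar
  have hB0 : 0 ≤ B := le_trans (hA0 1 le_rfl) (hB 1 le_rfl hnstar1)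
  have hQ1 : 0 < Q 1 := hQpos 1 le_rfl
  have hQge : ∀ n : ℝ, 1 ≤ n → Q 1 ≤ Q n := by
    intro n hn
    have h := hQmono 1 n le_rfl hn
    have hpos : 0 < n := lt_of_lt_of_le one_pos hn
    have h1 : ((1:ℝ) / n) ^ α ≤ 1 :=
      Real.rpow_le_one (by positivity) (by rw [div_le_one hpos]; exact hn) hα.le
    calc Q 1 ≤ (1 / n) ^ α * Q n := h
      _ ≤ 1 * Q n := mul_le_mul_of_nonneg_right h1 (hQpos n hn).le
      _ = Q n := one_mul _
  set D₁ : ℝ := max (B / Q 1) (2 * c₀) with hD₁def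
  have hD₁pos : 0 < D₁ := lt_max_of_lt_right (by linarith)
  have hD₁B : B / Q 1 ≤ D₁ := le_max_left _ _
  have hD₁c : 2 * c₀ ≤ D₁ := le_max_right _ _
  have base : ∀ n : ℝ, 1 ≤ n → n ≤ nstar → A n ≤ D₁ * Q n := by
    intro n h1 h2
    have hQn := hQpos n h1
    calc A n ≤ B := hB n h1 h2
      _ = B / Q 1 * Q 1 := by field_simp
      _ ≤ D₁ * Q n := by
          apply mul_le_mul hD₁B (hQge n h1) hQ1.le hD₁pos.le
  have key : ∀ k : ℕ, ∀ n : ℝ, 1 ≤ n → n ≤ nstar / δ ^ k → A n ≤ D₁ * Q n := by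
    intro k
    induction k with
    | zero => intro n h1 h2; simp at h2; exact base n h1 h2
    | succ k ih =>
      intro n h1 h2
      by_cases hcase : n ≤ nstar
      · exact base n h1 hcase
      push_neg at hcase
      have hn0 : 0 < n := lt_of_lt_of_le one_pos h1
      have hδn1 : (1 : ℝ) ≤ δ * n := le_trans hδnstar
        (mul_le_mul_of_nonneg_left hcase.le hδ0.le)
      have hδnk : δ * n ≤ nstar / δ ^ k := by
        rw [le_div_iff₀ (by positivity)] at h2 ⊢
        calc δ * n * δ ^ k = n * δ ^ (k + 1) := by ring
          _ ≤ nstar := h2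
      have hsup : sSup (A '' Set.Icc 1 (δ * n)) ≤ D₁ * δ ^ α * Q n := by
        apply csSup_le ((Set.nonempty_Icc.mpr hδn1).image A)
        rintro y ⟨m, hm, rfl⟩
        obtain ⟨hm1, hm2⟩ := hm
        have hmn : m ≤ n := le_trans hm2 (by nlinarith)
        have hQm : Q m ≤ (m / n) ^ α * Q n := hQmono m n hm1 hmn
        have hpow : (m / n) ^ α ≤ δ ^ α := by
          apply Real.rpow_le_rpow (by positivity) _ hα.le
          rw [div_le_iff₀ hn0]; linarith
        have hAm : A m ≤ D₁ * Q m := ih m hm1 (le_trans hm2 hδnk)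
        calc A m ≤ D₁ * Q m := hAm
          _ ≤ D₁ * ((m / n) ^ α * Q n) :=
              mul_le_mul_of_nonneg_left hQm hD₁pos.le
          _ ≤ D₁ * (δ ^ α * Q n) := by
              apply mul_le_mul_of_nonneg_left _ hD₁pos.le
              exact mul_le_mul_of_nonneg_right hpow (hQpos n h1).le
          _ = D₁ * δ ^ α * Q n := by ring
      have hrecn := hrec n hcase.le
      have hQn := hQpos n h1
      have hδα0 : (0:ℝ) ≤ δ ^ α := by positivity
      nlinarith [mul_le_mul_of_nonneg_right hδα.le hQn.le,
        mul_le_mul_of_nonneg_right hD₁c hQn.le,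
        mul_pos hD₁pos hQn]
  refine ⟨D₁, hD₁pos, fun n h1 => ?_⟩
  have hn0 : 0 < n := lt_of_lt_of_le one_pos h1
  obtain ⟨k, hk⟩ := exists_pow_lt_of_lt_one (div_pos (lt_of_lt_of_le one_pos hnstar1) hn0) hδ1
  exact key k n h1 (by rw [le_div_iff₀ (by positivity)]
                       rw [lt_div_iff₀ hn0] at hk; nlinarith)
end

section
/- Let α ∈ (0,1), δ ∈ (0, 1/3], Ĉ ≥ 1 and n' ≥ 1. Let Q̂ : [1, ∞) → (0, ∞) be a function such that Q(n) := sup_{1 ≤ m ≤ n} (n/m)^α·Q̂(m) is finite for every n ≥ 1, and assume Q̂(2n) ≤ Ĉ·Q((1+δ)·n) for all n ≥ n'. Then, with D₆ = max{ 2·Ĉ·(3/2)^α, 2·Q(3n')/Q(1) }, one has Q((3/2)·m) ≤ D₆·Q(m) for all m ≥ 1. -/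
/-- The regularised scale `Q(n) = sup_{1 ≤ m ≤ n} (n/m)^α · Q̂(m)`. -/
noncomputable def Qreg (α : ℝ) (Qhat : ℝ → ℝ) (n : ℝ) : ℝ :=
  sSup ((fun m => (n / m) ^ α * Qhat m) '' Set.Icc 1 n)

private lemma le_Qreg {α : ℝ} {Qhat : ℝ → ℝ} {n m : ℝ}
    (hbdd : BddAbove ((fun m => (n / m) ^ α * Qhat m) '' Set.Icc 1 n))
    (hm : m ∈ Set.Icc 1 n) : (n / m) ^ α * Qhat m ≤ Qreg α Qhat n :=
  le_csSup hbdd ⟨m, hm, rfl⟩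

private lemma Qreg_pos {α : ℝ} (hα0 : 0 < α) {Qhat : ℝ → ℝ}
    (hQpos : ∀ m : ℝ, 1 ≤ m → 0 < Qhat m)
    (hQbdd : ∀ n : ℝ, 1 ≤ n → BddAbove ((fun m => (n / m) ^ α * Qhat m) '' Set.Icc 1 n))
    {n : ℝ} (hn : 1 ≤ n) : 0 < Qreg α Qhat n := by
  have h := le_Qreg (hQbdd n hn) (m := n) ⟨hn, le_refl n⟩
  have hne : n ≠ 0 := by linarith
  rw [div_self hne, Real.one_rpow, one_mul] at h
  exact lt_of_lt_of_le (hQpos n hn) h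

private lemma Qreg_mono {α : ℝ} (hα0 : 0 < α) {Qhat : ℝ → ℝ}
    (hQpos : ∀ m : ℝ, 1 ≤ m → 0 < Qhat m)
    (hQbdd : ∀ n : ℝ, 1 ≤ n → BddAbove ((fun m => (n / m) ^ α * Qhat m) '' Set.Icc 1 n))
    {a b : ℝ} (ha : 1 ≤ a) (hab : a ≤ b) : Qreg α Qhat a ≤ Qreg α Qhat b := by
  have hb : 1 ≤ b := ha.trans hab
  apply Real.sSup_le
  · rintro x ⟨m, hm, rfl⟩
    have hm0 : (0:ℝ) < m := lt_of_lt_of_le one_pos hm.1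
    calc (a / m) ^ α * Qhat m ≤ (b / m) ^ α * Qhat m := by
          apply mul_le_mul_of_nonneg_right
          · exact Real.rpow_le_rpow (by positivity) (by gcongr) hα0.le
          · exact (hQpos m hm.1).le
      _ ≤ Qreg α Qhat b := le_Qreg (hQbdd b hb) ⟨hm.1, hm.2.trans hab⟩
  · exact (Qreg_pos hα0 hQpos hQbdd hb).le

theorem statement11 (α δ Chat n' : ℝ) (hα0 : 0 < α) (hα1 : α < 1)
    (hδ0 : 0 < δ) (hδ1 : δ ≤ 1 / 3) (hChat : 1 ≤ Chat) (hn' : 1 ≤ n')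
    (Qhat : ℝ → ℝ)
    (hQpos : ∀ m : ℝ, 1 ≤ m → 0 < Qhat m)
    (hQbdd : ∀ n : ℝ, 1 ≤ n → BddAbove ((fun m => (n / m) ^ α * Qhat m) '' Set.Icc 1 n))
    (hgrow : ∀ n : ℝ, n' ≤ n → Qhat (2 * n) ≤ Chat * Qreg α Qhat ((1 + δ) * n)) :
    ∀ m : ℝ, 1 ≤ m →
      Qreg α Qhat (3 / 2 * m) ≤
        max (2 * Chat * ((3 : ℝ) / 2) ^ α) (2 * Qreg α Qhat (3 * n') / Qreg α Qhat 1) *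
          Qreg α Qhat m := by
  intro m hm
  set D : ℝ := max (2 * Chat * ((3 : ℝ) / 2) ^ α) (2 * Qreg α Qhat (3 * n') / Qreg α Qhat 1)
    with hD
  have hQm : 0 < Qreg α Qhat m := Qreg_pos hα0 hQpos hQbdd hm
  have hQ1 : 0 < Qreg α Qhat 1 := Qreg_pos hα0 hQpos hQbdd le_rfl
  have hrp : (0:ℝ) < ((3:ℝ)/2) ^ α := Real.rpow_pos_of_pos (by norm_num) α
  have hDpos : 0 < D := lt_of_lt_of_le (by positivity) (le_max_left _ _)
  by_cases hcase : m < 2 * n'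
  · -- small m: use monotonicity up to 3 n'
    have h1 : Qreg α Qhat (3/2 * m) ≤ Qreg α Qhat (3 * n') :=
      Qreg_mono hα0 hQpos hQbdd (by linarith) (by linarith)
    have hQ3 : 0 < Qreg α Qhat (3 * n') := Qreg_pos hα0 hQpos hQbdd (by linarith)
    have h2 : Qreg α Qhat (3 * n') ≤ (2 * Qreg α Qhat (3 * n') / Qreg α Qhat 1) * Qreg α Qhat m := by
      have hm1 : Qreg α Qhat 1 ≤ Qreg α Qhat m := Qreg_mono hα0 hQpos hQbdd le_rfl hm
      rw [div_mul_eq_mul_div, le_div_iff₀ hQ1]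
      nlinarith
    calc Qreg α Qhat (3/2 * m) ≤ (2 * Qreg α Qhat (3 * n') / Qreg α Qhat 1) * Qreg α Qhat m :=
          h1.trans h2
      _ ≤ D * Qreg α Qhat m := by
          apply mul_le_mul_of_nonneg_right (le_max_right _ _) hQm.le
  · -- large m: 2 n' ≤ m
    push_neg at hcase
    apply Real.sSup_le
    · rintro x ⟨k, hk, rfl⟩
      dsimp only
      have hk0 : (0:ℝ) < k := lt_of_lt_of_le one_pos hk.1
      have hQk : (0:ℝ) ≤ Qhat k := (hQpos k hk.1).le
      by_cases hkm : k ≤ m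
      · -- k ≤ m
        have heq : (3/2 * m / k) = (3/2) * (m / k) := by ring
        have h1 : (3/2 * m / k) ^ α * Qhat k = ((3:ℝ)/2) ^ α * ((m/k) ^ α * Qhat k) := by
          rw [heq, Real.mul_rpow (by norm_num) (by positivity), mul_assoc]
        rw [h1]
        have h2 : (m/k) ^ α * Qhat k ≤ Qreg α Qhat m :=
          le_Qreg (hQbdd m hm) ⟨hk.1, hkm⟩
        calc ((3:ℝ)/2) ^ α * ((m/k) ^ α * Qhat k) ≤ ((3:ℝ)/2) ^ α * Qreg α Qhat m := by
              exact mul_le_mul_of_nonneg_left h2 hrp.le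
          _ ≤ D * Qreg α Qhat m := by
              apply mul_le_mul_of_nonneg_right _ hQm.le
              refine le_trans ?_ (le_max_left _ _)
              nlinarith
      · -- m < k ≤ 3/2 m, so k ≥ 2 n'
        push_neg at hkm
        have hk2 : n' ≤ k / 2 := by linarith
        have hg := hgrow (k/2) hk2
        rw [mul_div_cancel₀ _ (two_ne_zero)] at hg
        -- Qhat k ≤ Chat * Qreg ((1+δ) * (k/2))
        have harg1 : (1:ℝ) ≤ (1 + δ) * (k/2) := by nlinarith
        have harg2 : (1 + δ) * (k/2) ≤ m := by nlinarith [hk.2]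
        have hQmono : Qreg α Qhat ((1+δ) * (k/2)) ≤ Qreg α Qhat m :=
          Qreg_mono hα0 hQpos hQbdd harg1 harg2
        have hcoef : (3/2 * m / k) ^ α ≤ ((3:ℝ)/2) ^ α := by
          apply Real.rpow_le_rpow (by positivity) _ hα0.le
          rw [div_le_iff₀ hk0]
          nlinarith
        have hQreg_nonneg : 0 ≤ Qreg α Qhat ((1+δ) * (k/2)) :=
          (Qreg_pos hα0 hQpos hQbdd harg1).le
        calc (3/2 * m / k) ^ α * Qhat k ≤ ((3:ℝ)/2) ^ α * Qhat k :=
              mul_le_mul_of_nonneg_right hcoef hQk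
          _ ≤ ((3:ℝ)/2) ^ α * (Chat * Qreg α Qhat ((1+δ) * (k/2))) :=
              mul_le_mul_of_nonneg_left hg hrp.le
          _ ≤ ((3:ℝ)/2) ^ α * (Chat * Qreg α Qhat m) := by
              have : 0 < Chat := lt_of_lt_of_le one_pos hChat
              exact mul_le_mul_of_nonneg_left
                (mul_le_mul_of_nonneg_left hQmono this.le) hrp.le
          _ ≤ D * Qreg α Qhat m := by
              refine le_trans ?_
                (mul_le_mul_of_nonneg_right (le_max_left _ _) hQm.le)
              nlinarith [mul_pos (mul_pos hrp hQm) (lt_of_lt_of_le one_pos hChat)]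
    · positivity
end

section
/- Let θ ∈ (0,1), Q > 0 and K ≥ 1. Let X be a real random variable such that ℙ(|X − 𝔼X| > t·Q) ≤ exp(1 − t^θ) for all t > 0, and suppose that ℙ(|X − 𝔼X| > x⋆·Q) = exp(1 − x⋆^θ) for some x⋆ ∈ [1, K]. Let δ > 0 satisfy δ < (1/2)·exp(1 − K^θ) and ∫₀^∞ min(δ, exp(1 − t^θ)) dt < (1/3)·exp(1 − K^θ). Then ℙ(|X − y| ≤ Q/3) ≤ 1 − δ for every y ∈ ℝ. -/
open MeasureTheory Real Set

lemma exp_stretched_integrableOn (θ : ℝ) (hθ0 : 0 < θ) :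
    IntegrableOn (fun t : ℝ => Real.exp (1 - t ^ θ)) (Set.Ioi 0) := by
  have hp : (1 / θ : ℝ) ≠ 0 := by positivity
  rw [← integrableOn_Ioi_comp_rpow_iff (fun t : ℝ => Real.exp (1 - t ^ θ)) hp]
  have hbase : IntegrableOn
      (fun x : ℝ => (|1 / θ| * Real.exp 1) * (Real.exp (-x) * x ^ (1 / θ - 1)))
      (Set.Ioi 0) :=
    (Real.GammaIntegral_convergent (by positivity : (0:ℝ) < 1 / θ)).const_mul _
  refine hbase.congr_fun (fun x hx => ?_) measurableSet_Ioi
  rw [Set.mem_Ioi] at hx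
  have h1 : (x ^ (1/θ : ℝ)) ^ θ = x := by
    rw [← Real.rpow_mul hx.le, one_div, inv_mul_cancel₀ hθ0.ne', Real.rpow_one]
  rw [smul_eq_mul, h1, show (1 : ℝ) - x = 1 + -x by ring, Real.exp_add]
  ring

open MeasureTheory Real Set
open scoped ProbabilityTheory

lemma anticonc_core
    (θ Q xstar δ E Estar : ℝ) (hQ : 0 < Q) (hx1 : 1 ≤ xstar)
    (hδ0 : 0 < δ) (hδE : δ < E / 2) (hE1 : E ≤ 1) (hEE : E ≤ Estar)
    (Ω : Type) [MeasureSpace Ω] (hprob : IsProbabilityMeasure (ℙ : Measure Ω))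
    (W : Ω → ℝ) (hWm : Measurable W) (hWi : Integrable W) (hW0 : (∫ ω, W ω) = 0)
    (hWtail : ∀ s : ℝ, 0 < s →
      ℙ {ω | s < |W ω|} ≤ ENNReal.ofReal (Real.exp (1 - (s / Q) ^ θ)))
    (A B : Set Ω) (hAm : MeasurableSet A) (hBm : MeasurableSet B) (hBA : B ⊆ A)
    (hlow : ∀ ω ∈ A, (xstar - 2/3) * Q < W ω)
    (hhigh : ∀ ω ∈ B, xstar * Q < W ω)
    (ha : 1 - δ < (ℙ A).toReal)
    (hAc : ℙ Aᶜ ≤ ENNReal.ofReal δ)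
    (hb : Estar - δ ≤ (ℙ B).toReal)
    (hgc : Continuous fun s : ℝ => min δ (Real.exp (1 - (s / Q) ^ θ)))
    (hmin_int : IntegrableOn (fun s : ℝ => min δ (Real.exp (1 - (s / Q) ^ θ))) (Set.Ioi 0))
    (hJ : (∫ s in Set.Ioi (0:ℝ), min δ (Real.exp (1 - (s / Q) ^ θ))) < Q * ((1/3) * E)) :
    False := by
  set a := (ℙ A).toReal with ha_def
  set b := (ℙ B).toReal with hb_def
  set J := ∫ s in Set.Ioi (0:ℝ), min δ (Real.exp (1 - (s / Q) ^ θ)) with hJ_def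
  have hJ0 : 0 ≤ J := setIntegral_nonneg measurableSet_Ioi
    (fun s _ => le_min hδ0.le (Real.exp_pos _).le)
  -- upper bound for ∫_{Aᶜ} |W|
  have hkey : (∫ ω in Aᶜ, |W ω|) ≤ J := by
    have h1 : (∫ ω in Aᶜ, |W ω|) = (∫⁻ ω in Aᶜ, ENNReal.ofReal |W ω|).toReal := by
      rw [integral_eq_lintegral_of_nonneg_ae
        (Filter.Eventually.of_forall fun ω => abs_nonneg _) hWm.abs.aestronglyMeasurable]
    have h2 : (∫⁻ ω in Aᶜ, ENNReal.ofReal |W ω|)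
        = ∫⁻ s in Set.Ioi (0:ℝ), ((ℙ : Measure Ω).restrict Aᶜ) {ω | s < |W ω|} :=
      lintegral_eq_lintegral_meas_lt _
        (Filter.Eventually.of_forall fun ω => abs_nonneg _) hWm.abs.aemeasurable
    have h3 : (∫⁻ s in Set.Ioi (0:ℝ), ((ℙ : Measure Ω).restrict Aᶜ) {ω | s < |W ω|})
        ≤ ∫⁻ s in Set.Ioi (0:ℝ),
            ENNReal.ofReal (min δ (Real.exp (1 - (s / Q) ^ θ))) := by
      refine setLIntegral_mono (ENNReal.measurable_ofReal.comp hgc.measurable) ?_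
      intro s hs
      have hsm : MeasurableSet {ω | s < |W ω|} := measurableSet_lt measurable_const hWm.abs
      rw [Measure.restrict_apply hsm]
      rcases le_total δ (Real.exp (1 - (s / Q) ^ θ)) with hle | hle
      · rw [min_eq_left hle]
        exact le_trans (measure_mono Set.inter_subset_right) hAc
      · rw [min_eq_right hle]
        exact le_trans (measure_mono Set.inter_subset_left) (hWtail s hs)
    have h4 : (∫⁻ s in Set.Ioi (0:ℝ),
        ENNReal.ofReal (min δ (Real.exp (1 - (s / Q) ^ θ)))) = ENNReal.ofReal J :=
      (ofReal_integral_eq_lintegral_ofReal hmin_int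
        (Filter.Eventually.of_forall fun s => le_min hδ0.le (Real.exp_pos _).le)).symm
    rw [h1, h2]
    exact ENNReal.toReal_le_of_le_ofReal hJ0 (le_trans h3 (le_of_eq h4))
  -- lower bounds
  have hdiffR : (ℙ (A \ B)).toReal = a - b := by
    rw [measure_diff hBA hBm.nullMeasurableSet (measure_ne_top _ _),
      ENNReal.toReal_sub_of_le (measure_mono hBA) (measure_ne_top _ _)]
  have hlow1 : (xstar - 2/3) * Q * (a - b) ≤ ∫ ω in A \ B, W ω := by
    rw [← hdiffR]
    exact setIntegral_ge_of_const_le_real (hAm.diff hBm) (measure_ne_top _ _)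
      (fun ω hω => (hlow ω hω.1).le) hWi.integrableOn
  have hlow2 : xstar * Q * b ≤ ∫ ω in B, W ω :=
    setIntegral_ge_of_const_le_real hBm (measure_ne_top _ _)
      (fun ω hω => (hhigh ω hω).le) hWi.integrableOn
  have hABsplit : (∫ ω in A, W ω) = (∫ ω in A \ B, W ω) + ∫ ω in B, W ω := by
    rw [← setIntegral_union Set.disjoint_sdiff_left hBm hWi.integrableOn hWi.integrableOn,
      Set.diff_union_of_subset hBA]
  have hsplit : (∫ ω in A, W ω) + (∫ ω in Aᶜ, W ω) = 0 := by
    rw [integral_add_compl hAm hWi, hW0]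
  have hAcW : -(∫ ω in Aᶜ, |W ω|) ≤ ∫ ω in Aᶜ, W ω := by
    have h := norm_integral_le_integral_norm (μ := (ℙ : Measure Ω).restrict Aᶜ) W
    simp only [Real.norm_eq_abs] at h
    have := neg_abs_le (∫ ω in Aᶜ, W ω)
    linarith [abs_nonneg (∫ ω in Aᶜ, W ω)]
  -- arithmetic
  have ha0 : 0 ≤ a := ENNReal.toReal_nonneg
  have hb0 : 0 ≤ b := ENNReal.toReal_nonneg
  have hc : Q / 3 ≤ (xstar - 2/3) * Q := by nlinarith
  have h5 : (Q / 3) * a ≤ (xstar - 2/3) * Q * a := mul_le_mul_of_nonneg_right hc ha0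
  have h6 : (Q / 3) * (1 - δ) < (Q / 3) * a :=
    mul_lt_mul_of_pos_left ha (by positivity)
  have h7 : (2/3 * Q) * (E - δ) ≤ (2/3 * Q) * b :=
    mul_le_mul_of_nonneg_left (by linarith) (by positivity)
  have hid : (xstar - 2/3) * Q * (a - b) + xstar * Q * b
      = (xstar - 2/3) * Q * a + (2/3 * Q) * b := by ring
  have hEQ : 0 < Q * (1/3 - δ + E/3) := mul_pos hQ (by linarith)
  nlinarith [hkey, hlow1, hlow2, hABsplit, hsplit, hAcW, hJ, h5, h6, h7, hEQ]

open MeasureTheory Real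
open scoped ProbabilityTheory

theorem statement12 (θ Q K : ℝ) (hθ0 : 0 < θ) (hθ1 : θ < 1) (hQ : 0 < Q) (hK : 1 ≤ K)
    (Ω : Type) [MeasureSpace Ω] (hprob : IsProbabilityMeasure (ℙ : Measure Ω))
    (X : Ω → ℝ) (hX : Measurable X)
    (htail : ∀ t : ℝ, 0 < t →
      ℙ {ω | t * Q < |X ω - ∫ ω', X ω'|} ≤ ENNReal.ofReal (Real.exp (1 - t ^ θ)))
    (xstar : ℝ) (hx1 : 1 ≤ xstar) (hxK : xstar ≤ K)
    (heq : ℙ {ω | xstar * Q < |X ω - ∫ ω', X ω'|} = ENNReal.ofReal (Real.exp (1 - xstar ^ θ)))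
    (δ : ℝ) (hδ0 : 0 < δ) (hδ1 : δ < (1 / 2) * Real.exp (1 - K ^ θ))
    (hδint : (∫ t in Set.Ioi (0 : ℝ), min δ (Real.exp (1 - t ^ θ))) <
      (1 / 3) * Real.exp (1 - K ^ θ)) :
    ∀ y : ℝ, ℙ {ω | |X ω - y| ≤ Q / 3} ≤ ENNReal.ofReal (1 - δ) := by
  classical
  set μ0 := ∫ ω', X ω' with hμ0
  set Z := fun ω => X ω - μ0 with hZdef
  have hZm : Measurable Z := hX.sub measurable_const
  have hQne : Q ≠ 0 := hQ.ne'
  -- tail for Z in terms of s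
  have hZtail : ∀ s : ℝ, 0 < s →
      ℙ {ω | s < |Z ω|} ≤ ENNReal.ofReal (Real.exp (1 - (s / Q) ^ θ)) := by
    intro s hs
    have h := htail (s / Q) (div_pos hs hQ)
    have hset : {ω | s / Q * Q < |X ω - μ0|} = {ω | s < |Z ω|} := by
      ext ω; simp [hZdef, div_mul_cancel₀ s hQne]
    rwa [hset] at h
  -- continuity / integrability of comparison functions
  have hgcont : Continuous fun s : ℝ => Real.exp (1 - (s / Q) ^ θ) :=
    Real.continuous_exp.comp (continuous_const.sub
      ((Real.continuous_rpow_const hθ0.le).comp (continuous_id.div_const Q)))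
  have hexpInt : IntegrableOn (fun s : ℝ => Real.exp (1 - (s / Q) ^ θ)) (Set.Ioi 0) := by
    have h0 := exp_stretched_integrableOn θ hθ0
    have h := (integrableOn_Ioi_comp_mul_left_iff
      (fun t : ℝ => Real.exp (1 - t ^ θ)) 0 (inv_pos.mpr hQ)).mpr (by simpa using h0)
    refine h.congr_fun (fun s _ => ?_) measurableSet_Ioi
    rw [div_eq_inv_mul]
  have hmin_int : IntegrableOn
      (fun s : ℝ => min δ (Real.exp (1 - (s / Q) ^ θ))) (Set.Ioi 0) := by
    refine MeasureTheory.Integrable.mono hexpInt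
      (continuous_const.min hgcont).aestronglyMeasurable.restrict ?_
    refine Filter.Eventually.of_forall fun s => ?_
    rw [Real.norm_eq_abs, Real.norm_eq_abs,
      abs_of_nonneg (le_min hδ0.le (Real.exp_pos _).le), abs_of_pos (Real.exp_pos _)]
    exact min_le_right _ _
  -- integrability of Z and X
  have hZint : Integrable Z := by
    refine ⟨hZm.aestronglyMeasurable, ?_⟩
    rw [hasFiniteIntegral_iff_norm]
    have h2 : (∫⁻ ω, ENNReal.ofReal ‖Z ω‖) = ∫⁻ s in Set.Ioi (0:ℝ), ℙ {ω | s < |Z ω|} := by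
      simp only [Real.norm_eq_abs]
      exact lintegral_eq_lintegral_meas_lt _
        (Filter.Eventually.of_forall fun ω => abs_nonneg _) hZm.abs.aemeasurable
    rw [h2]
    calc (∫⁻ s in Set.Ioi (0:ℝ), ℙ {ω | s < |Z ω|})
        ≤ ∫⁻ s in Set.Ioi (0:ℝ), ENNReal.ofReal (Real.exp (1 - (s / Q) ^ θ)) :=
          setLIntegral_mono (ENNReal.measurable_ofReal.comp hgcont.measurable)
            (fun s hs => hZtail s hs)
      _ = ENNReal.ofReal (∫ s in Set.Ioi (0:ℝ), Real.exp (1 - (s / Q) ^ θ)) :=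
          (ofReal_integral_eq_lintegral_ofReal hexpInt
            (Filter.Eventually.of_forall fun s => (Real.exp_pos _).le)).symm
      _ < ⊤ := ENNReal.ofReal_lt_top
  have hXint : Integrable X := by
    refine (hZint.add (integrable_const μ0)).congr (Filter.Eventually.of_forall fun ω => ?_)
    simp [hZdef]
  have hZ0 : (∫ ω, Z ω) = 0 := by
    rw [show (∫ ω, Z ω) = ∫ ω, (X ω - μ0) from rfl,
      integral_sub hXint (integrable_const μ0), integral_const]
    simp [hμ0, measure_univ]
  -- numeric setup
  set E := Real.exp (1 - K ^ θ) with hE_def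
  set Estar := Real.exp (1 - xstar ^ θ) with hEstar_def
  have hK1 : (1:ℝ) ≤ K ^ θ := by
    calc (1:ℝ) = 1 ^ θ := (Real.one_rpow θ).symm
    _ ≤ K ^ θ := Real.rpow_le_rpow zero_le_one hK hθ0.le
  have hE1 : E ≤ 1 := by
    calc E = Real.exp (1 - K ^ θ) := hE_def
      _ ≤ Real.exp 0 := Real.exp_le_exp.mpr (by linarith)
      _ = 1 := Real.exp_zero
  have hEE : E ≤ Estar := Real.exp_le_exp.mpr
    (by have := Real.rpow_le_rpow (by linarith : (0:ℝ) ≤ xstar) hxK hθ0.le; linarith)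
  have hδE : δ < E / 2 := by rw [hE_def]; linarith
  have hδ1' : δ < 1 / 2 := lt_of_lt_of_le hδE (by linarith)
  -- scaled integral bound
  have hscale : (∫ s in Set.Ioi (0:ℝ), min δ (Real.exp (1 - (s / Q) ^ θ)))
      = Q * ∫ t in Set.Ioi (0:ℝ), min δ (Real.exp (1 - t ^ θ)) := by
    have h := integral_comp_mul_left_Ioi
      (fun t : ℝ => min δ (Real.exp (1 - t ^ θ))) 0 (inv_pos.mpr hQ)
    simp only [mul_zero, smul_eq_mul, inv_inv] at h
    calc (∫ s in Set.Ioi (0:ℝ), min δ (Real.exp (1 - (s / Q) ^ θ)))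
        = ∫ s in Set.Ioi (0:ℝ), min δ (Real.exp (1 - (Q⁻¹ * s) ^ θ)) := by
          refine setIntegral_congr_fun measurableSet_Ioi fun s _ => ?_
          rw [div_eq_inv_mul]
      _ = Q * ∫ t in Set.Ioi (0:ℝ), min δ (Real.exp (1 - t ^ θ)) := h
  have hJ : (∫ s in Set.Ioi (0:ℝ), min δ (Real.exp (1 - (s / Q) ^ θ))) < Q * ((1/3) * E) := by
    rw [hscale]
    exact mul_lt_mul_of_pos_left hδint hQ
  -- main argument
  intro y
  by_contra hcon
  rw [not_le] at hcon
  set A := {ω | |X ω - y| ≤ Q / 3} with hA_def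
  have hAm : MeasurableSet A := measurableSet_le (hX.sub measurable_const).abs measurable_const
  set T := {ω | xstar * Q < |Z ω|} with hT_def
  have hTm : MeasurableSet T := measurableSet_lt measurable_const hZm.abs
  have hTmeas : ℙ T = ENNReal.ofReal Estar := heq
  have ha : 1 - δ < (ℙ A).toReal := by
    have h1 : (ENNReal.ofReal (1 - δ)).toReal < (ℙ A).toReal :=
      ENNReal.toReal_strict_mono (measure_ne_top _ _) hcon
    rwa [ENNReal.toReal_ofReal (by linarith : (0:ℝ) ≤ 1 - δ)] at h1
  have hAc : ℙ Aᶜ ≤ ENNReal.ofReal δ := by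
    rw [prob_compl_eq_one_sub hAm]
    calc (1 : ENNReal) - ℙ A ≤ 1 - ENNReal.ofReal (1 - δ) := tsub_le_tsub_left hcon.le 1
      _ = ENNReal.ofReal δ := by
        rw [show (1:ENNReal) = ENNReal.ofReal 1 from ENNReal.ofReal_one.symm,
          ← ENNReal.ofReal_sub 1 (by linarith : (0:ℝ) ≤ 1 - δ)]
        norm_num
  have hAcr : (ℙ Aᶜ).toReal ≤ δ := ENNReal.toReal_le_of_le_ofReal hδ0.le hAc
  set B := A ∩ T with hB_def
  have hBm : MeasurableSet B := hAm.inter hTm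
  have hb : Estar - δ ≤ (ℙ B).toReal := by
    have hsub : T ⊆ B ∪ Aᶜ := fun ω hω => by
      by_cases h : ω ∈ A
      · exact Or.inl ⟨h, hω⟩
      · exact Or.inr h
    have h1 : ℙ T ≤ ℙ B + ℙ Aᶜ := le_trans (measure_mono hsub) (measure_union_le _ _)
    have h2 : (ℙ T).toReal ≤ (ℙ B).toReal + (ℙ Aᶜ).toReal := by
      rw [← ENNReal.toReal_add (measure_ne_top _ _) (measure_ne_top _ _)]
      exact ENNReal.toReal_mono
        (ENNReal.add_ne_top.mpr ⟨measure_ne_top _ _, measure_ne_top _ _⟩) h1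
    have h3 : (ℙ T).toReal = Estar := by
      rw [hTmeas, ENNReal.toReal_ofReal (Real.exp_pos _).le]
    linarith
  -- B is nonempty
  have hBne : B.Nonempty := by
    refine nonempty_of_measure_ne_zero (μ := (ℙ : Measure Ω)) (s := B) ?_
    intro h0
    rw [h0] at hb
    simp only [ENNReal.toReal_zero] at hb
    have : 2 * δ < E := by linarith
    linarith [hEE]
  obtain ⟨ω₀, hω₀A, hω₀T⟩ := hBne
  have hω₀A' : |X ω₀ - y| ≤ Q / 3 := hω₀A
  have hgcont' : Continuous fun s : ℝ => min δ (Real.exp (1 - (s / Q) ^ θ)) :=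
    continuous_const.min hgcont
  have hω₀T' : xstar * Q < |Z ω₀| := hω₀T
  rcases lt_abs.mp hω₀T' with hup | hdown
  · -- upper case: use W := Z
    have hlow : ∀ ω ∈ A, (xstar - 2/3) * Q < Z ω := by
      intro ω hω
      have h1 : |X ω - y| ≤ Q / 3 := hω
      have h2 := abs_le.mp h1
      have h3 := abs_le.mp hω₀A'
      have h4 : xstar * Q < X ω₀ - μ0 := hup
      simp only [hZdef]
      linarith
    have hhigh : ∀ ω ∈ B, xstar * Q < Z ω := by
      intro ω hω
      have h1 := hlow ω hω.1
      have hωT : xstar * Q < |Z ω| := hω.2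
      rcases lt_abs.mp hωT with h | h
      · exact h
      · simp only [hZdef] at h1 h ⊢
        nlinarith [mul_pos hQ (show (0:ℝ) < 2*xstar - 2/3 by linarith)]
    exact (anticonc_core θ Q xstar δ E Estar hQ hx1 hδ0 hδE hE1 hEE Ω hprob
      Z hZm hZint hZ0 hZtail A B hAm hBm Set.inter_subset_left hlow hhigh ha hAc hb
      hgcont' hmin_int hJ)
  · -- lower case: use W := -Z
    have hWm : Measurable fun ω => -Z ω := hZm.neg
    have hWi : Integrable fun ω => -Z ω := hZint.neg
    have hW0 : (∫ ω, -Z ω) = 0 := by rw [integral_neg, hZ0, neg_zero]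
    have hWtail : ∀ s : ℝ, 0 < s →
        ℙ {ω | s < abs (-Z ω)} ≤ ENNReal.ofReal (Real.exp (1 - (s / Q) ^ θ)) := by
      intro s hs
      have h := hZtail s hs
      simpa [abs_neg] using h
    have hlow : ∀ ω ∈ A, (xstar - 2/3) * Q < -Z ω := by
      intro ω hω
      have h2 := abs_le.mp (show |X ω - y| ≤ Q / 3 from hω)
      have h3 := abs_le.mp hω₀A'
      have h4 : xstar * Q < -(X ω₀ - μ0) := hdown
      simp only [hZdef]
      linarith
    have hhigh : ∀ ω ∈ B, xstar * Q < -Z ω := by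
      intro ω hω
      have h1 := hlow ω hω.1
      have hωT : xstar * Q < |Z ω| := hω.2
      rcases lt_abs.mp hωT with h | h
      · simp only [hZdef] at h1 h ⊢
        nlinarith [mul_pos hQ (show (0:ℝ) < 2*xstar - 2/3 by linarith)]
      · exact h
    exact (anticonc_core θ Q xstar δ E Estar hQ hx1 hδ0 hδE hE1 hEE Ω hprob
      (fun ω => -Z ω) hWm hWi hW0 hWtail A B hAm hBm Set.inter_subset_left hlow hhigh ha hAc hb
      hgcont' hmin_int hJ)
end

section
/- Let θ ∈ (0,1) and v > 0. There exists ε > 0, depending only on θ and v, such that for every real random variable Z with 𝔼Z = 0, Var(Z) ≥ v, and ℙ(|Z| > t) ≤ exp(1 − t^θ) for all t > 0, one has ℙ(Z ≥ ε) ≥ ε. -/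
open MeasureTheory ProbabilityTheory Real Set
open scoped ProbabilityTheory ENNReal Nat

lemma stmt13_exp_decay (θ : ℝ) (hθ0 : 0 < θ) :
    ∃ K : ℝ, 0 < K ∧ ∀ t : ℝ, 1 ≤ t →
      Real.exp (1 - t ^ θ) * t ^ (3:ℝ) ≤ K * t ^ (-2:ℝ) := by
  set k : ℕ := ⌈5 / θ⌉₊ with hk
  refine ⟨Real.exp 1 * (k : ℕ)!, by positivity, ?_⟩
  intro t ht
  have ht0 : (0:ℝ) < t := lt_of_lt_of_le one_pos ht
  have h5 : (5:ℝ) ≤ θ * k := by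
    have := Nat.le_ceil (5 / θ)
    calc (5:ℝ) = θ * (5/θ) := by field_simp
    _ ≤ θ * k := by
        exact mul_le_mul_of_nonneg_left (by exact_mod_cast this) hθ0.le
  set u : ℝ := t ^ θ with hu
  have hu0 : 0 < u := Real.rpow_pos_of_pos ht0 θ
  -- u^k / k! ≤ exp u
  have hsum : u ^ k / (k : ℕ)! ≤ Real.exp u := by
    have h1 : u ^ k / (k : ℕ)! ≤ ∑ i ∈ Finset.range (k+1), u ^ i / i ! := by
      refine Finset.single_le_sum (f := fun i => u ^ i / (i ! : ℝ)) ?_ ?_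
      · intro i _; positivity
      · exact Finset.self_mem_range_succ k
    exact h1.trans (Real.sum_le_exp_of_nonneg hu0.le (k+1))
  have hexpneg : Real.exp (-u) ≤ (k : ℕ)! / u ^ k := by
    rw [Real.exp_neg, inv_eq_one_div,
      div_le_div_iff₀ (Real.exp_pos u) (by positivity), one_mul]
    rw [div_le_iff₀ (by positivity : (0:ℝ) < ((k : ℕ)! : ℝ))] at hsum
    nlinarith [hsum]
  have huk : u ^ k = t ^ (θ * (k:ℝ)) := by
    rw [hu, ← Real.rpow_natCast (t ^ θ) k, ← Real.rpow_mul ht0.le]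
  have key : Real.exp (-u) * t ^ (3:ℝ) ≤ ((k : ℕ)! : ℝ) * t ^ (-2:ℝ) := by
    have h2 : Real.exp (-u) * t ^ (3:ℝ) ≤ ((k : ℕ)! / t ^ (θ * (k:ℝ))) * t ^ (3:ℝ) := by
      apply mul_le_mul_of_nonneg_right _ (Real.rpow_nonneg ht0.le _)
      rwa [huk] at hexpneg
    refine h2.trans ?_
    rw [div_mul_eq_mul_div, mul_div_assoc, ← Real.rpow_sub ht0]
    apply mul_le_mul_of_nonneg_left _ (by positivity)
    exact Real.rpow_le_rpow_of_exponent_le ht (by linarith)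
  calc Real.exp (1 - u) * t ^ (3:ℝ) = Real.exp 1 * (Real.exp (-u) * t ^ (3:ℝ)) := by
        rw [show (1:ℝ) - u = 1 + (-u) by ring, Real.exp_add]; ring
  _ ≤ Real.exp 1 * (((k : ℕ)! : ℝ) * t ^ (-2:ℝ)) :=
      mul_le_mul_of_nonneg_left key (Real.exp_pos 1).le
  _ = Real.exp 1 * (k : ℕ)! * t ^ (-2:ℝ) := by ring

lemma stmt13_moment4 (θ : ℝ) (hθ0 : 0 < θ) :
    ∃ M : ℝ, 0 ≤ M ∧
      ∀ (Ω : Type) [MeasureSpace Ω], IsProbabilityMeasure (ℙ : Measure Ω) →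
      ∀ Z : Ω → ℝ, Measurable Z →
      (∀ t : ℝ, 0 < t → ℙ {ω | t < |Z ω|} ≤ ENNReal.ofReal (Real.exp (1 - t ^ θ))) →
      ∫⁻ ω, ENNReal.ofReal ((Z ω) ^ 4) ∂ℙ ≤ ENNReal.ofReal M := by
  obtain ⟨K, hK, hKle⟩ := stmt13_exp_decay θ hθ0
  set J : ℝ≥0∞ := ∫⁻ t in Ioi (1:ℝ), ENNReal.ofReal (K * t ^ (-2:ℝ)) with hJ
  have hJfin : J < ∞ := by
    have hint : IntegrableOn (fun t : ℝ => K * t ^ (-2:ℝ)) (Ioi 1) := by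
      exact (integrableOn_Ioi_rpow_of_lt (by norm_num) one_pos).const_mul K
    exact hint.lintegral_lt_top
  set C : ℝ≥0∞ := ENNReal.ofReal 4 * (1 + J) with hC
  have hCfin : C ≠ ∞ := by
    rw [hC]
    exact ENNReal.mul_ne_top ENNReal.ofReal_ne_top
      (by simp [ENNReal.add_ne_top, hJfin.ne])
  refine ⟨C.toReal, ENNReal.toReal_nonneg, ?_⟩
  introv hprob hZmeas htail
  rw [ENNReal.ofReal_toReal hCfin]
  have habs : ∀ ω, ENNReal.ofReal (Z ω ^ 4) = ENNReal.ofReal (|Z ω| ^ (4:ℝ)) := by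
    intro ω
    rw [show (4:ℝ) = ((4:ℕ):ℝ) by norm_num, Real.rpow_natCast, pow_abs,
      abs_of_nonneg (by positivity)]
  calc ∫⁻ ω, ENNReal.ofReal (Z ω ^ 4) ∂ℙ
      = ∫⁻ ω, ENNReal.ofReal (|Z ω| ^ (4:ℝ)) ∂ℙ := by simp_rw [habs]
  _ = ENNReal.ofReal 4 * ∫⁻ t in Ioi 0,
        ℙ {a | t < |Z a|} * ENNReal.ofReal (t ^ ((4:ℝ) - 1)) := by
      exact lintegral_rpow_eq_lintegral_meas_lt_mul ℙ
        (ae_of_all _ fun ω => abs_nonneg _) hZmeas.abs.aemeasurable (by norm_num)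
  _ ≤ ENNReal.ofReal 4 * (1 + J) := by
      apply mul_le_mul_right
      rw [← Set.Ioc_union_Ioi_eq_Ioi (zero_le_one : (0:ℝ) ≤ 1),
        lintegral_union measurableSet_Ioi (Set.Ioc_disjoint_Ioi le_rfl)]
      apply add_le_add
      · calc ∫⁻ t in Ioc (0:ℝ) 1, ℙ {a | t < |Z a|} * ENNReal.ofReal (t ^ ((4:ℝ)-1))
            ≤ ∫⁻ _ in Ioc (0:ℝ) 1, 1 := by
              refine setLIntegral_mono' measurableSet_Ioc fun t ht => ?_
              refine mul_le_one' prob_le_one ?_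
              rw [show ((1:ℝ≥0∞)) = ENNReal.ofReal 1 by simp]
              exact ENNReal.ofReal_le_ofReal
                (Real.rpow_le_one ht.1.le ht.2 (by norm_num))
        _ = 1 := by rw [setLIntegral_one, Real.volume_Ioc]; simp
      · refine setLIntegral_mono' measurableSet_Ioi fun t ht => ?_
        have ht1 : (1:ℝ) ≤ t := (mem_Ioi.mp ht).le
        have ht0 : (0:ℝ) < t := lt_of_lt_of_le one_pos ht1
        calc ℙ {a | t < |Z a|} * ENNReal.ofReal (t ^ ((4:ℝ)-1))
            ≤ ENNReal.ofReal (Real.exp (1 - t ^ θ)) * ENNReal.ofReal (t ^ ((4:ℝ)-1)) :=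
              mul_le_mul_left (htail t ht0) _
        _ = ENNReal.ofReal (Real.exp (1 - t ^ θ) * t ^ ((4:ℝ)-1)) :=
              (ENNReal.ofReal_mul (Real.exp_pos _).le).symm
        _ ≤ ENNReal.ofReal (K * t ^ (-2:ℝ)) := by
              apply ENNReal.ofReal_le_ofReal
              have := hKle t ht1
              norm_num at this ⊢
              exact this

lemma stmt13_first_moment {Ω : Type} [MeasureSpace Ω]
    [IsProbabilityMeasure (ℙ : Measure Ω)] {W : Ω → ℝ} {v M' : ℝ}
    (hv : 0 < v) (hM' : 0 < M')
    (hW_nonneg : ∀ ω, 0 ≤ W ω)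
    (hW_int : Integrable W) (hW2_int : Integrable (fun ω => W ω ^ 2))
    (hW4_int : Integrable (fun ω => W ω ^ 4))
    (h2 : v / 2 ≤ ∫ ω, W ω ^ 2) (h4 : ∫ ω, W ω ^ 4 ≤ M') :
    v / (4 * Real.sqrt (4 * M' / v)) ≤ ∫ ω, W ω := by
  set A := Real.sqrt (4 * M' / v) with hA
  have hA0 : 0 < A := Real.sqrt_pos.2 (by positivity)
  have hA2 : A ^ 2 = 4 * M' / v := Real.sq_sqrt (by positivity)
  have hpt : ∀ ω, W ω ^ 2 ≤ A * W ω + W ω ^ 4 / A ^ 2 := by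
    intro ω
    set w := W ω with hw
    have hw0 : 0 ≤ w := hW_nonneg ω
    rcases le_total w A with h | h
    · have : w ^ 2 ≤ A * w := by nlinarith
      have h' : 0 ≤ w ^ 4 / A ^ 2 := by positivity
      linarith
    · have hA2w : A ^ 2 ≤ w ^ 2 := by nlinarith
      have : w ^ 2 ≤ w ^ 4 / A ^ 2 := by
        rw [le_div_iff₀ (by positivity)]
        nlinarith [mul_nonneg (sq_nonneg w) (sub_nonneg.2 hA2w)]
      have h' : 0 ≤ A * w := by positivity
      linarith
  have hsum_int : Integrable (fun ω => A * W ω + W ω ^ 4 / A ^ 2) :=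
    (hW_int.const_mul A).add (hW4_int.div_const (A ^ 2))
  have hmono := integral_mono hW2_int hsum_int hpt
  rw [integral_add (hW_int.const_mul A) (hW4_int.div_const (A ^ 2)),
    integral_const_mul, integral_div] at hmono
  have h4' : (∫ ω, W ω ^ 4) / A ^ 2 ≤ v / 4 := by
    rw [hA2, div_le_iff₀ (by positivity : (0:ℝ) < 4 * M' / v)]
    calc (∫ ω, W ω ^ 4) ≤ M' := h4
    _ = v / 4 * (4 * M' / v) := by field_simp
  have hAW : v / 4 ≤ A * ∫ ω, W ω := by linarith
  rw [div_le_iff₀ (by positivity : (0:ℝ) < 4 * A)]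
  nlinarith [hAW]

set_option maxHeartbeats 1600000 in
theorem statement13 (θ v : ℝ) (hθ0 : 0 < θ) (hθ1 : θ < 1) (hv : 0 < v) :
    ∃ ε : ℝ, 0 < ε ∧
      ∀ (Ω : Type) [MeasureSpace Ω], IsProbabilityMeasure (ℙ : Measure Ω) →
      ∀ Z : Ω → ℝ, Measurable Z →
      (∫ ω, Z ω) = 0 →
      v ≤ ProbabilityTheory.variance Z ℙ →
      (∀ t : ℝ, 0 < t → ℙ {ω | t < |Z ω|} ≤ ENNReal.ofReal (Real.exp (1 - t ^ θ))) →
      ENNReal.ofReal ε ≤ ℙ {ω | ε ≤ Z ω} := by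
  obtain ⟨M, hM0, hMbound⟩ := stmt13_moment4 θ hθ0
  set M' : ℝ := M + 1 with hM'
  have hM'0 : 0 < M' := by linarith
  set A : ℝ := Real.sqrt (4 * M' / v) with hA
  have hA0 : 0 < A := Real.sqrt_pos.2 (by positivity)
  set c : ℝ := v / (4 * A) with hc
  have hc0 : 0 < c := by positivity
  set M₂ : ℝ := 1 + M' with hM₂
  have hM₂0 : 0 < M₂ := by linarith
  set B : ℝ := 4 * M₂ / c with hB
  have hB0 : 0 < B := by positivity
  refine ⟨min (c / 4) (c ^ 2 / (8 * M₂)), by positivity, ?_⟩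
  set ε : ℝ := min (c / 4) (c ^ 2 / (8 * M₂)) with hε
  have hε0 : 0 < ε := by positivity
  have hεc : ε ≤ c / 4 := min_le_left _ _
  have hεP : ε ≤ c ^ 2 / (8 * M₂) := min_le_right _ _
  clear_value M' A c M₂ B ε
  intro Ω inst hprob Z hZmeas hmean hvar htail
  -- basic integrability from the fourth moment bound
  have h4lin : ∫⁻ ω, ENNReal.ofReal (Z ω ^ 4) ∂ℙ ≤ ENNReal.ofReal M :=
    hMbound Ω hprob Z hZmeas htail
  set q : Ω → ℝ := fun ω => Z ω ^ 4 with hq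
  have hq_nonneg : ∀ ω, 0 ≤ q ω := fun ω => by positivity
  have hq_meas : Measurable q := hZmeas.pow_const 4
  have hq_int : Integrable q := by
    refine ⟨hq_meas.aestronglyMeasurable, ?_⟩
    rw [hasFiniteIntegral_iff_ofReal (ae_of_all _ hq_nonneg)]
    exact lt_of_le_of_lt h4lin ENNReal.ofReal_lt_top
  have hq_val : ∫ ω, q ω ≤ M := by
    rw [integral_eq_lintegral_of_nonneg_ae (ae_of_all _ hq_nonneg)
      hq_meas.aestronglyMeasurable]
    exact ENNReal.toReal_le_of_le_ofReal hM0 h4lin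
  have hhelp : ∀ a : ℝ, 0 ≤ a → a ≤ 1 + a ^ 4 ∧ a ^ 2 ≤ 1 + a ^ 4 := by
    intro a ha
    rcases le_total a 1 with h | h
    · constructor <;> nlinarith [pow_nonneg ha 4, sq_nonneg (1 - a), sq_nonneg a]
    · have h14 : a ≤ a ^ 4 := by
        calc a = a ^ 1 := (pow_one a).symm
        _ ≤ a ^ 4 := pow_le_pow_right₀ h (by norm_num)
      have h24 : a ^ 2 ≤ a ^ 4 := pow_le_pow_right₀ h (by norm_num)
      constructor <;> nlinarith
  have hZ_int : Integrable Z := by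
    refine Integrable.mono' ((integrable_const (1:ℝ)).add hq_int)
      hZmeas.aestronglyMeasurable (ae_of_all _ fun ω => ?_)
    have h4e : |Z ω| ^ 4 = Z ω ^ 4 := by
      rw [pow_abs, abs_of_nonneg (by positivity : (0:ℝ) ≤ Z ω ^ 4)]
    have h1 := (hhelp |Z ω| (abs_nonneg _)).1
    show |Z ω| ≤ 1 + Z ω ^ 4
    linarith [h4e.le, h4e.ge]
  have hZ2_int : Integrable (fun ω => Z ω ^ 2) := by
    refine Integrable.mono' ((integrable_const (1:ℝ)).add hq_int)
      (hZmeas.pow_const 2).aestronglyMeasurable (ae_of_all _ fun ω => ?_)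
    have h4e : |Z ω| ^ 4 = Z ω ^ 4 := by
      rw [pow_abs, abs_of_nonneg (by positivity : (0:ℝ) ≤ Z ω ^ 4)]
    have h2e : |Z ω| ^ 2 = Z ω ^ 2 := by
      rw [pow_abs, abs_of_nonneg (by positivity : (0:ℝ) ≤ Z ω ^ 2)]
    have h2 := (hhelp |Z ω| (abs_nonneg _)).2
    show |Z ω ^ 2| ≤ 1 + Z ω ^ 4
    rw [abs_of_nonneg (by positivity : (0:ℝ) ≤ Z ω ^ 2)]
    linarith [h4e.le, h4e.ge, h2e.le, h2e.ge]
  have hmem2 : MemLp Z 2 ℙ :=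
    (memLp_two_iff_integrable_sq hZmeas.aestronglyMeasurable).2 hZ2_int
  have hvar2 : v ≤ ∫ ω, Z ω ^ 2 := by
    have h := variance_eq_sub hmem2
    rw [hmean] at h
    simp only [Pi.pow_apply] at h
    calc v ≤ variance Z ℙ := hvar
    _ = ∫ ω, Z ω ^ 2 := by rw [h]; ring
  -- positive and negative parts
  set X : Ω → ℝ := fun ω => max (Z ω) 0 with hX
  set Y : Ω → ℝ := fun ω => max (-Z ω) 0 with hY
  have hX_nonneg : ∀ ω, 0 ≤ X ω := fun ω => le_max_right _ _
  have hY_nonneg : ∀ ω, 0 ≤ Y ω := fun ω => le_max_right _ _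
  have hXabs : ∀ ω, X ω ≤ |Z ω| := fun ω => max_le (le_abs_self _) (abs_nonneg _)
  have hYabs : ∀ ω, Y ω ≤ |Z ω| := fun ω => max_le (neg_le_abs _) (abs_nonneg _)
  have hX_meas : Measurable X := hZmeas.max measurable_const
  have hX_int : Integrable X := hZ_int.pos_part
  have hY_int : Integrable Y := hZ_int.neg.pos_part
  have habs2 : ∀ ω, |Z ω| ^ 2 = Z ω ^ 2 := fun ω => by
    rw [pow_abs, abs_of_nonneg (by positivity : (0:ℝ) ≤ Z ω ^ 2)]
  have habs4 : ∀ ω, |Z ω| ^ 4 = Z ω ^ 4 := fun ω => by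
    rw [pow_abs, abs_of_nonneg (by positivity : (0:ℝ) ≤ Z ω ^ 4)]
  have hX2_int : Integrable (fun ω => X ω ^ 2) := by
    refine hZ2_int.mono' ((hX_meas.pow_const 2).aestronglyMeasurable)
      (ae_of_all _ fun ω => ?_)
    rw [norm_eq_abs, abs_of_nonneg (by positivity : (0:ℝ) ≤ X ω ^ 2)]
    calc X ω ^ 2 ≤ |Z ω| ^ 2 := pow_le_pow_left₀ (hX_nonneg ω) (hXabs ω) 2
    _ = Z ω ^ 2 := habs2 ω
  have hY2_int : Integrable (fun ω => Y ω ^ 2) := by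
    refine hZ2_int.mono' (((hZmeas.neg.max measurable_const).pow_const 2).aestronglyMeasurable)
      (ae_of_all _ fun ω => ?_)
    rw [norm_eq_abs, abs_of_nonneg (by positivity : (0:ℝ) ≤ Y ω ^ 2)]
    calc Y ω ^ 2 ≤ |Z ω| ^ 2 := pow_le_pow_left₀ (hY_nonneg ω) (hYabs ω) 2
    _ = Z ω ^ 2 := habs2 ω
  have hX4_int : Integrable (fun ω => X ω ^ 4) := by
    refine hq_int.mono' ((hX_meas.pow_const 4).aestronglyMeasurable)
      (ae_of_all _ fun ω => ?_)
    rw [norm_eq_abs, abs_of_nonneg (by positivity : (0:ℝ) ≤ X ω ^ 4)]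
    calc X ω ^ 4 ≤ |Z ω| ^ 4 := pow_le_pow_left₀ (hX_nonneg ω) (hXabs ω) 4
    _ = Z ω ^ 4 := habs4 ω
  have hY4_int : Integrable (fun ω => Y ω ^ 4) := by
    refine hq_int.mono' (((hZmeas.neg.max measurable_const).pow_const 4).aestronglyMeasurable)
      (ae_of_all _ fun ω => ?_)
    rw [norm_eq_abs, abs_of_nonneg (by positivity : (0:ℝ) ≤ Y ω ^ 4)]
    calc Y ω ^ 4 ≤ |Z ω| ^ 4 := pow_le_pow_left₀ (hY_nonneg ω) (hYabs ω) 4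
    _ = Z ω ^ 4 := habs4 ω
  have hX4_le : ∫ ω, X ω ^ 4 ≤ M' := by
    have h := integral_mono hX4_int hq_int (fun ω => by
      calc X ω ^ 4 ≤ |Z ω| ^ 4 := pow_le_pow_left₀ (hX_nonneg ω) (hXabs ω) 4
      _ = q ω := habs4 ω)
    linarith [hq_val]
  have hY4_le : ∫ ω, Y ω ^ 4 ≤ M' := by
    have h := integral_mono hY4_int hq_int (fun ω => by
      calc Y ω ^ 4 ≤ |Z ω| ^ 4 := pow_le_pow_left₀ (hY_nonneg ω) (hYabs ω) 4
      _ = q ω := habs4 ω)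
    linarith [hq_val]
  have hXY : ∫ ω, X ω = ∫ ω, Y ω := by
    have h0 : ∫ ω, (X ω - Y ω) = 0 := by
      calc ∫ ω, (X ω - Y ω) = ∫ ω, Z ω := by
            refine integral_congr_ae (ae_of_all _ fun ω => ?_)
            exact max_zero_sub_max_neg_zero_eq_self (Z ω)
      _ = 0 := hmean
    rw [integral_sub hX_int hY_int] at h0
    linarith
  have hsum2 : (∫ ω, X ω ^ 2) + ∫ ω, Y ω ^ 2 = ∫ ω, Z ω ^ 2 := by
    rw [← integral_add hX2_int hY2_int]
    refine integral_congr_ae (ae_of_all _ fun ω => ?_)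
    show X ω ^ 2 + Y ω ^ 2 = Z ω ^ 2
    rcases le_total (Z ω) 0 with h | h
    · show max (Z ω) 0 ^ 2 + max (-Z ω) 0 ^ 2 = Z ω ^ 2
      rw [max_eq_right h, max_eq_left (by linarith : (0:ℝ) ≤ -Z ω)]; ring
    · show max (Z ω) 0 ^ 2 + max (-Z ω) 0 ^ 2 = Z ω ^ 2
      rw [max_eq_left h, max_eq_right (by linarith : -Z ω ≤ (0:ℝ))]; ring
  have hEX : c ≤ ∫ ω, X ω := by
    rw [hc, hA]
    rcases le_or_gt (v / 2) (∫ ω, X ω ^ 2) with h | h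
    · exact stmt13_first_moment hv hM'0 hX_nonneg hX_int hX2_int hX4_int h hX4_le
    · have hY2 : v / 2 ≤ ∫ ω, Y ω ^ 2 := by linarith [hvar2, hsum2]
      have h' := stmt13_first_moment hv hM'0 hY_nonneg hY_int hY2_int hY4_int hY2 hY4_le
      rw [hXY]; exact h'
  have hX2_le : ∫ ω, X ω ^ 2 ≤ M₂ := by
    have hg_int : Integrable (fun ω => 1 + q ω) := (integrable_const (1:ℝ)).add hq_int
    have h := integral_mono hX2_int hg_int (fun ω => by
      show X ω ^ 2 ≤ 1 + q ω
      have h1 : X ω ^ 2 ≤ |Z ω| ^ 2 := pow_le_pow_left₀ (hX_nonneg ω) (hXabs ω) 2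
      have h2 := (hhelp |Z ω| (abs_nonneg _)).2
      have h4e := habs4 ω
      show X ω ^ 2 ≤ 1 + Z ω ^ 4
      linarith [h4e.le, h4e.ge])
    rw [integral_add (integrable_const (1:ℝ)) hq_int, integral_const] at h
    simp only [probReal_univ, ENNReal.toReal_one, smul_eq_mul, one_mul] at h
    have : (1:ℝ) + ∫ ω, q ω ≤ M₂ := by rw [hM₂, hM']; linarith [hq_val]
    linarith
  set S : Set Ω := {ω | ε ≤ Z ω} with hSdef
  have hSmeas : MeasurableSet S := measurableSet_le measurable_const hZmeas
  have hSiff : ∀ ω, ω ∈ S ↔ ε ≤ X ω := by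
    intro ω
    simp only [hSdef, Set.mem_setOf_eq]
    constructor
    · intro h; exact le_max_of_le_left h
    · intro h
      rcases le_max_iff.mp h with h | h
      · exact h
      · linarith
  have hind_int : Integrable (S.indicator fun _ => B) :=
    (integrable_const B).indicator hSmeas
  have hptX : ∀ ω, X ω ≤ ε + S.indicator (fun _ => B) ω + X ω ^ 2 / B := by
    intro ω
    have hXsq : 0 ≤ X ω ^ 2 / B := by positivity
    by_cases hω : ω ∈ S
    · rw [Set.indicator_of_mem hω]
      rcases le_total (X ω) B with h | h
      · linarith
      · have hXB : X ω ≤ X ω ^ 2 / B := by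
          rw [le_div_iff₀ hB0]
          nlinarith [hX_nonneg ω]
        linarith
    · rw [Set.indicator_of_notMem hω]
      have hlt : ¬ (ε ≤ X ω) := fun h => hω ((hSiff ω).2 h)
      push_neg at hlt
      linarith
  have hg1 : Integrable (fun ω => ε + S.indicator (fun _ => B) ω) :=
    (integrable_const ε).add hind_int
  have hint_rhs : Integrable (fun ω => (ε + S.indicator (fun _ => B) ω) + X ω ^ 2 / B) :=
    hg1.add (hX2_int.div_const B)
  have hmono := integral_mono hX_int hint_rhs hptX
  rw [integral_add hg1 (hX2_int.div_const B),
    integral_add (integrable_const ε) hind_int, integral_const,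
    integral_indicator_const _ hSmeas, integral_div] at hmono
  simp only [probReal_univ, ENNReal.toReal_one, smul_eq_mul, one_mul] at hmono
  set P : ℝ := (ℙ S).toReal with hPdef
  have hP0 : 0 ≤ P := ENNReal.toReal_nonneg
  have h1 : (∫ ω, X ω ^ 2) / B ≤ c / 4 := by
    rw [div_le_iff₀ hB0]
    calc ∫ ω, X ω ^ 2 ≤ M₂ := hX2_le
    _ = c / 4 * B := by rw [hB]; field_simp
  have hPB : c / 2 ≤ P * B := by
    have : c ≤ ε + P * B + (∫ ω, X ω ^ 2) / B := le_trans hEX hmono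
    linarith [hεc, h1]
  have hPε : ε ≤ P := by
    have hBc : B * c = 4 * M₂ := by rw [hB]; field_simp
    have key : c ^ 2 / (8 * M₂) ≤ P := by
      rw [div_le_iff₀ (by positivity : (0:ℝ) < 8 * M₂)]
      have h := mul_le_mul_of_nonneg_right hPB hc0.le
      nlinarith [h, hBc]
    linarith [hεP]
  calc ENNReal.ofReal ε ≤ ENNReal.ofReal P := ENNReal.ofReal_le_ofReal hPε
  _ = ℙ S := ENNReal.ofReal_toReal (measure_ne_top _ _)
end

section
/- Let α' ∈ (0, 1/10) and let Q̂ : [1, ∞) → (0, ∞) be upper semicontinuous with Q(n) := sup_{1 ≤ m ≤ n} (n/m)^{α'}·Q̂(m) finite for all n ≥ 1; call n a record point if Q(n) = Q̂(n). Suppose: (i) there exist D₅ ≥ 1 and n⋆ ≥ 1 such that Q(n'') ≤ D₅·(n''/n)^{3/4}·Q(n) whenever n⋆ ≤ n ≤ n''; (ii) M ≥ 2 satisfies D₅·2^{3/4}·(M/2)^{α'} < M^{1/10}; (iii) n₀ ≥ n⋆ is a record point and Q(M·n) ≥ M^{1/10}·Q(n) for every record point n ≥ n₀. Then for every n' ≥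 n₀ there exists a record point n with n'/M ≤ n ≤ n'. -/
open Filter Set Topology

/-- Upper semicontinuous functions on a compact set attain their supremum. -/
lemma usc_exists_max {s : Set ℝ} {f : ℝ → ℝ} (hs : IsCompact s) (hne : s.Nonempty)
    (hf : UpperSemicontinuousOn f s) (hb : BddAbove (f '' s)) :
    ∃ x ∈ s, ∀ y ∈ s, f y ≤ f x := by
  set S := sSup (f '' s) with hS
  have hex : ∀ k : ℕ, ∃ x, x ∈ s ∧ S - 1 / (k + 1) < f x := by
    intro k
    have h1 : S - 1 / ((k : ℝ) + 1) < S := by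
      have : 0 < 1 / ((k : ℝ) + 1) := by positivity
      linarith
    obtain ⟨y, hy, hlt⟩ := exists_lt_of_lt_csSup (hne.image f) h1
    obtain ⟨x, hx, rfl⟩ := hy
    exact ⟨x, hx, hlt⟩
  choose u hu hfu using hex
  obtain ⟨x, hx, φ, hφ, hconv⟩ := hs.tendsto_subseq hu
  refine ⟨x, hx, fun y hy => ?_⟩
  have h1 : f y ≤ S := le_csSup hb ⟨y, hy, rfl⟩
  have h2 : S ≤ f x := by
    by_contra h
    push_neg at h
    obtain ⟨y', hy'1, hy'2⟩ := exists_between h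
    have hev : ∀ᶠ m in 𝓝[s] x, f m < y' := hf x hx y' hy'1
    have htend : Tendsto (u ∘ φ) atTop (𝓝[s] x) :=
      tendsto_nhdsWithin_of_tendsto_nhds_of_eventually_within _ hconv
        (Eventually.of_forall fun k => hu _)
    have hev2 : ∀ᶠ k in atTop, f (u (φ k)) < y' := htend.eventually hev
    have htend2 : Tendsto (fun k : ℕ => 1 / ((φ k : ℝ) + 1)) atTop (𝓝 0) :=
      tendsto_one_div_add_atTop_nhds_zero_nat.comp hφ.tendsto_atTop
    have hev3 : ∀ᶠ k in atTop, 1 / ((φ k : ℝ) + 1) < S - y' :=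
      htend2.eventually_lt_const (by linarith)
    obtain ⟨k, hk1, hk2⟩ := (hev2.and hev3).exists
    have := hfu (φ k)
    linarith
  linarith

/-- The defining element: `Qhat n ≤ Qreg α' Qhat n`. -/
lemma Qhat_le_Qreg {α' : ℝ} {Qhat : ℝ → ℝ} {n : ℝ} (hn : 1 ≤ n)
    (hb : BddAbove ((fun m => (n / m) ^ α' * Qhat m) '' Set.Icc 1 n)) :
    Qhat n ≤ Qreg α' Qhat n := by
  have : Qhat n = (fun m => (n / m) ^ α' * Qhat m) n := by
    simp only
    rw [div_self (by linarith : n ≠ 0), Real.one_rpow, one_mul]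
  rw [this]
  exact le_csSup hb ⟨n, ⟨hn, le_rfl⟩, rfl⟩

theorem statement14 (α' : ℝ) (hα'0 : 0 < α') (hα'1 : α' < 1 / 10)
    (Qhat : ℝ → ℝ)
    (hQpos : ∀ m : ℝ, 1 ≤ m → 0 < Qhat m)
    (husc : UpperSemicontinuousOn Qhat (Set.Ici (1 : ℝ)))
    (hQbdd : ∀ n : ℝ, 1 ≤ n → BddAbove ((fun m => (n / m) ^ α' * Qhat m) '' Set.Icc 1 n))
    (D₅ nstar : ℝ) (hD₅ : 1 ≤ D₅) (hnstar : 1 ≤ nstar)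
    (hgrow : ∀ n n'' : ℝ, nstar ≤ n → n ≤ n'' →
      Qreg α' Qhat n'' ≤ D₅ * (n'' / n) ^ ((3 : ℝ) / 4) * Qreg α' Qhat n)
    (M : ℝ) (hM : 2 ≤ M)
    (hMgap : D₅ * (2 : ℝ) ^ ((3 : ℝ) / 4) * (M / 2) ^ α' < M ^ ((1 : ℝ) / 10))
    (n₀ : ℝ) (hn₀ : nstar ≤ n₀)
    (hn₀rec : Qreg α' Qhat n₀ = Qhat n₀)
    (hinc : ∀ n : ℝ, n₀ ≤ n → Qreg α' Qhat n = Qhat n →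
      M ^ ((1 : ℝ) / 10) * Qreg α' Qhat n ≤ Qreg α' Qhat (M * n)) :
    ∀ n' : ℝ, n₀ ≤ n' →
      ∃ n : ℝ, 1 ≤ n ∧ n' / M ≤ n ∧ n ≤ n' ∧ Qreg α' Qhat n = Qhat n := by
  -- positivity of Qreg
  have hQregpos : ∀ n : ℝ, 1 ≤ n → 0 < Qreg α' Qhat n := fun n hn =>
    lt_of_lt_of_le (hQpos n hn) (Qhat_le_Qreg hn (hQbdd n hn))
  -- key monotonicity: (n/k)^α' * Qreg k ≤ Qreg n for 1 ≤ k ≤ n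
  have hkey : ∀ k n : ℝ, 1 ≤ k → k ≤ n →
      (n / k) ^ α' * Qreg α' Qhat k ≤ Qreg α' Qhat n := by
    intro k n hk hkn
    have hn : (1 : ℝ) ≤ n := hk.trans hkn
    have hkpos : (0 : ℝ) < k := by linarith
    have hnpos : (0 : ℝ) < n := by linarith
    have hc : (0 : ℝ) < (n / k) ^ α' := Real.rpow_pos_of_pos (by positivity) _
    rw [mul_comm, ← le_div_iff₀ hc]
    unfold Qreg
    apply csSup_le ((Set.nonempty_Icc.2 hk).image _)
    rintro _ ⟨j, hj, rfl⟩
    have hjpos : (0 : ℝ) < j := by linarith [hj.1]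
    rw [le_div_iff₀ hc]
    have hrw : (k / j) ^ α' * Qhat j * (n / k) ^ α' = (n / j) ^ α' * Qhat j := by
      rw [mul_right_comm, ← Real.mul_rpow (by positivity) (by positivity)]
      congr 2
      field_simp
    rw [hrw]
    exact le_csSup (hQbdd n hn) ⟨j, ⟨hj.1, hj.2.trans hkn⟩, rfl⟩
  intro n' hn'
  have h1n₀ : (1 : ℝ) ≤ n₀ := hnstar.trans hn₀
  have h1n' : (1 : ℝ) ≤ n' := h1n₀.trans hn'
  have hMpos : (0 : ℝ) < M := by linarith
  have hn'pos : (0 : ℝ) < n' := by linarith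
  -- case n'/M ≤ n₀
  by_cases hcase : n' / M ≤ n₀
  · exact ⟨n₀, h1n₀, hcase, hn', hn₀rec⟩
  push_neg at hcase
  -- the function g
  set g : ℝ → ℝ := fun m => (n' / m) ^ α' * Qhat m with hg
  -- g is USC on Icc 1 n'
  have hgusc : UpperSemicontinuousOn g (Set.Icc 1 n') := by
    intro x hx y hy
    have hx1 : (1 : ℝ) ≤ x := hx.1
    have hxpos : (0 : ℝ) < x := by linarith
    have hcpos : (0 : ℝ) < (n' / x) ^ α' := Real.rpow_pos_of_pos (by positivity) _
    have hQx : 0 < Qhat x := hQpos x hx1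
    have hylt : Qhat x < y / (n' / x) ^ α' := by
      rw [lt_div_iff₀ hcpos]
      calc Qhat x * (n' / x) ^ α' = g x := by rw [hg]; ring
        _ < y := hy
    obtain ⟨z, hz1, hz2⟩ := exists_between hylt
    have hzpos : (0 : ℝ) < z := hQx.trans hz1
    have h1 : ∀ᶠ m in 𝓝[Set.Icc 1 n'] x, Qhat m < z :=
      (husc x hx1 z hz1).filter_mono (nhdsWithin_mono x Set.Icc_subset_Ici_self)
    have hcont : ContinuousWithinAt (fun m => (n' / m) ^ α') (Set.Icc 1 n') x := by
      apply ContinuousWithinAt.rpow_const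
      · exact (continuousWithinAt_const.div continuousWithinAt_id hxpos.ne')
      · exact Or.inr hα'0.le
    have hclt : (n' / x) ^ α' < y / z := by
      rw [lt_div_iff₀ hzpos]
      rw [lt_div_iff₀ hcpos] at hz2
      linarith [hz2]
    have h2 : ∀ᶠ m in 𝓝[Set.Icc 1 n'] x, (n' / m) ^ α' < y / z :=
      Filter.Tendsto.eventually_lt_const hclt hcont
    filter_upwards [h1, h2, self_mem_nhdsWithin] with m hm1 hm2 hm3
    have hmpos : (0 : ℝ) < m := by linarith [hm3.1]
    have hgm : (0 : ℝ) < (n' / m) ^ α' := Real.rpow_pos_of_pos (by positivity) _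
    calc g m = (n' / m) ^ α' * Qhat m := rfl
      _ < (n' / m) ^ α' * z := by exact mul_lt_mul_of_pos_left hm1 hgm
      _ < (y / z) * z := by exact mul_lt_mul_of_pos_right hm2 hzpos
      _ = y := div_mul_cancel₀ y hzpos.ne'
  -- get maximizer
  obtain ⟨m, hm, hmax⟩ := usc_exists_max isCompact_Icc (Set.nonempty_Icc.2 h1n')
    hgusc (hQbdd n' h1n')
  have hm1 : (1 : ℝ) ≤ m := hm.1
  have hmpos : (0 : ℝ) < m := by linarith
  -- Qreg n' = g m
  have hQn' : Qreg α' Qhat n' = g m := by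
    apply IsGreatest.csSup_eq
    exact ⟨⟨m, hm, rfl⟩, by rintro _ ⟨k, hk, rfl⟩; exact hmax k hk⟩
  -- m is a record point
  have hmrec : Qreg α' Qhat m = Qhat m := by
    apply le_antisymm
    · unfold Qreg
      apply csSup_le ((Set.nonempty_Icc.2 hm1).image _)
      rintro _ ⟨j, hj, rfl⟩
      have hjpos : (0 : ℝ) < j := by linarith [hj.1]
      have hgj := hmax j ⟨hj.1, hj.2.trans hm.2⟩
      have hcpos : (0 : ℝ) < (n' / m) ^ α' := Real.rpow_pos_of_pos (by positivity) _
      have hrw : (n' / j) ^ α' = (n' / m) ^ α' * (m / j) ^ α' := by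
        rw [← Real.mul_rpow (by positivity) (by positivity)]
        congr 1
        field_simp
      rw [hg] at hgj
      simp only at hgj
      rw [hrw, mul_assoc] at hgj
      exact le_of_mul_le_mul_left hgj hcpos
    · exact Qhat_le_Qreg hm1 (hQbdd m hm1)
  -- define the record point p = max m n₀
  set p : ℝ := max m n₀ with hp
  have hp1 : (1 : ℝ) ≤ p := le_trans h1n₀ (le_max_right _ _)
  have hpn₀ : n₀ ≤ p := le_max_right _ _
  have hpn' : p ≤ n' := max_le hm.2 hn'
  have hprec : Qreg α' Qhat p = Qhat p := by
    rcases max_cases m n₀ with ⟨h, _⟩ | ⟨h, _⟩ <;> rw [hp, h]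
    · exact hmrec
    · exact hn₀rec
  -- Qreg n' = (n'/p)^α' * Qreg p
  have heq : Qreg α' Qhat n' = (n' / p) ^ α' * Qreg α' Qhat p := by
    apply le_antisymm
    · rcases le_or_gt n₀ m with h | h
      · have : p = m := max_eq_left h
        rw [this, hQn', hmrec]
      · have hpeq : p = n₀ := max_eq_right h.le
        rw [hpeq, hQn', hg]
        simp only
        have hrw : (n' / m) ^ α' = (n' / n₀) ^ α' * (n₀ / m) ^ α' := by
          rw [← Real.mul_rpow (by positivity) (by positivity)]
          congr 1
          field_simp
        rw [hrw, mul_assoc]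
        apply mul_le_mul_of_nonneg_left _ (Real.rpow_pos_of_pos (by positivity) _).le
        exact le_csSup (hQbdd n₀ h1n₀) ⟨m, ⟨hm1, h.le⟩, rfl⟩
    · exact hkey p n' hp1 hpn'
  -- main case split: if n'/M ≤ p we are done
  by_cases hcase2 : n' / M ≤ p
  · exact ⟨p, hp1, hcase2, hpn', hprec⟩
  push_neg at hcase2
  exfalso
  have hMp : M * p ≤ n' := by
    have := (lt_div_iff₀ hMpos).1 hcase2
    nlinarith
  have hMp1 : (1 : ℝ) ≤ M * p := by nlinarith
  have hik := hinc p hpn₀ hprec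
  have hk2 := hkey (M * p) n' hMp1 hMp
  have hApos : (0 : ℝ) < (n' / (M * p)) ^ α' := Real.rpow_pos_of_pos (by positivity) _
  have hQp : (0 : ℝ) < Qreg α' Qhat p := hQregpos p hp1
  have hchain : (n' / (M * p)) ^ α' * (M ^ ((1:ℝ)/10) * Qreg α' Qhat p) ≤ Qreg α' Qhat n' := by
    calc (n' / (M * p)) ^ α' * (M ^ ((1:ℝ)/10) * Qreg α' Qhat p)
        ≤ (n' / (M * p)) ^ α' * Qreg α' Qhat (M * p) :=
          mul_le_mul_of_nonneg_left hik hApos.le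
      _ ≤ Qreg α' Qhat n' := hk2
  have hsplit : (n' / p) ^ α' = (n' / (M * p)) ^ α' * M ^ α' := by
    rw [← Real.mul_rpow (by positivity) (by positivity)]
    congr 1
    field_simp
  rw [heq, hsplit] at hchain
  have hfin : M ^ ((1:ℝ)/10) ≤ M ^ α' := by
    rw [mul_assoc] at hchain
    have h1 := le_of_mul_le_mul_left hchain hApos
    rw [mul_comm (M ^ ((1:ℝ)/10)), mul_comm (M ^ α')] at h1
    exact le_of_mul_le_mul_left h1 hQp
  have : (1:ℝ)/10 ≤ α' := (Real.rpow_le_rpow_left_iff (by linarith : (1:ℝ) < M)).1 hfin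
  linarith
end
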